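/- arXiv:2404.16639 — 5 statements merged into one kernel-verified Lean document; each statement's English description precedes it below -/
import Mathlib

section
/- Let n be a positive integer, V a nonzero finite-dimensional ℚ-vector space, and g a ℚ-linear automorphism of V with gⁿ = id_V. Suppose the representation is irreducible, i.e. the only ℚ-subspaces W of V with g(W) ⊆ W are 0 and V. Then there exist a positive divisor r of n, a primitive r-th root of unity ζ_r in the r-th cyclotomic field K_r = ℚ(ζ_r), and a ℚ-linear isomorphism e : V → K_r such that e(g(v)) = ζ_r · e(v) for all v ∈ V. -/
open Polynomial


/-- Every irreducible rational representation of a finite cyclic group of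
order `n` (given by an automorphism `g` of a nonzero finite-dimensional `ℚ`-vector space `V`
with `g ^ n = 1` admitting no nontrivial invariant subspace) is isomorphic to some cyclotomic
field `ℚ(ζ_r)` with `r ∣ n`, the generator acting by multiplication by a primitive `r`-th
root of unity `ζ_r`. -/
theorem stmt_3 (n : ℕ) (hn : 0 < n) (V : Type*) [AddCommGroup V] [Module ℚ V]
    [FiniteDimensional ℚ V] [Nontrivial V]
    (g : V ≃ₗ[ℚ] V) (hg : g ^ n = 1)
    (hirr : ∀ W : Submodule ℚ V, (∀ v ∈ W, g v ∈ W) → W = ⊥ ∨ W = ⊤) :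
    ∃ r : ℕ+, (r : ℕ) ∣ n ∧ ∃ ζ : CyclotomicField r ℚ,
      IsPrimitiveRoot ζ (r : ℕ) ∧
      ∃ e : V ≃ₗ[ℚ] CyclotomicField r ℚ, ∀ v, e (g v) = ζ * e v := by
  set f : Module.End ℚ V := g.toLinearMap with hf
  have hfg : ∀ v, f v = g v := fun v => rfl
  have hfn : f ^ n = 1 := by
    ext v
    have h1 : (g ^ n) v = v := by rw [hg]; rfl
    rw [LinearEquiv.pow_apply] at h1
    simpa [Module.End.pow_apply, hfg, hf] using h1
  have hint : IsIntegral ℚ f := ⟨X ^ n - 1, monic_X_pow_sub_C 1 hn.ne', by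
    simp [map_sub, aeval_X_pow, hfn]⟩
  set P : ℚ[X] := minpoly ℚ f with hP
  have hPmonic : P.Monic := minpoly.monic hint
  have hPne : P ≠ 0 := hPmonic.ne_zero
  have hPdeg : 0 < P.natDegree := minpoly.natDegree_pos hint
  -- P is irreducible
  have key : ∀ q : ℚ[X], Irreducible q → q ∣ P → aeval f q = 0 := by
    intro q hq hqP
    -- the kernel of aeval f q is a nonzero invariant subspace
    set W : Submodule ℚ V := LinearMap.ker (aeval f q) with hW
    have hWinv : ∀ v ∈ W, g v ∈ W := by
      intro v hv
      have hv' : (aeval f q) v = 0 := hv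
      have : (aeval f q) (g v) = g ((aeval f q) v) := by
        have hcomm : (aeval f q) * f = f * (aeval f q) := by
          have := (Commute.all q X).map (aeval f)
          rwa [Commute, SemiconjBy, aeval_X] at this
        have := congrArg (fun h : Module.End ℚ V => h v) hcomm
        simpa [Module.End.mul_apply, hfg] using this
      simp [hW, LinearMap.mem_ker, this, hv']
    have hWne : W ≠ ⊥ := by
      intro hbot
      have hinj : Function.Injective (aeval f q) := by
        rw [← LinearMap.ker_eq_bot]; exact hbot
      obtain ⟨c, hc⟩ := hqP
      have hc0 : aeval f c = 0 := by
        have h0 : aeval f q * aeval f c = 0 := by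
          rw [← map_mul, ← hc]; exact minpoly.aeval ℚ f
        ext v
        apply hinj
        have := congrArg (fun h : Module.End ℚ V => h v) h0
        simpa [Module.End.mul_apply] using this
      have hPc : P ∣ c := minpoly.dvd ℚ f hc0
      have hcne : c ≠ 0 := by
        intro h; rw [h, mul_zero] at hc; exact hPne hc
      have h1 : P.natDegree ≤ c.natDegree := natDegree_le_of_dvd hPc hcne
      have h2 : P.natDegree = q.natDegree + c.natDegree := by
        rw [hc, natDegree_mul hq.ne_zero hcne]
      have hq1 : 0 < q.natDegree := hq.natDegree_pos
      omega
    rcases hirr W hWinv with h | h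
    · exact absurd h hWne
    · -- W = ⊤ means aeval f q = 0
      ext v
      have : v ∈ W := h ▸ Submodule.mem_top
      exact this
  have hPirr : Irreducible P := by
    obtain ⟨q, hq, hqP⟩ := WfDvdMonoid.exists_irreducible_factor
      (Polynomial.not_isUnit_of_natDegree_pos P hPdeg) hPne
    have h0 := key q hq hqP
    have hPq : P ∣ q := minpoly.dvd ℚ f h0
    exact (associated_of_dvd_dvd hPq hqP).symm.irreducible hq
  -- identify P with a cyclotomic polynomial
  have hPdvd : P ∣ X ^ n - 1 := minpoly.dvd ℚ f (by simp [map_sub, aeval_X_pow, hfn])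
  have hprod : P ∣ ∏ i ∈ n.divisors, cyclotomic i ℚ := by
    rwa [Polynomial.prod_cyclotomic_eq_X_pow_sub_one hn ℚ]
  obtain ⟨r, hrmem, hrdvd⟩ := (hPirr.prime).exists_mem_finset_dvd hprod
  have hrpos : 0 < r := Nat.pos_of_mem_divisors hrmem
  have hrn : r ∣ n := Nat.dvd_of_mem_divisors hrmem
  have hcyc_irr : Irreducible (cyclotomic r ℚ) := cyclotomic.irreducible_rat hrpos
  have hPeq : P = cyclotomic r ℚ :=
    eq_of_monic_of_associated hPmonic (cyclotomic.monic r ℚ)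
      (hPirr.associated_of_dvd hcyc_irr hrdvd)
  set r' : ℕ+ := ⟨r, hrpos⟩ with hr'
  set K := CyclotomicField r' ℚ with hK
  haveI : IsCyclotomicExtension {(r' : ℕ)} ℚ K :=
    CyclotomicField.isCyclotomicExtension r' ℚ
  have hζ := IsCyclotomicExtension.zeta_spec r' ℚ K
  set ζ := IsCyclotomicExtension.zeta r' ℚ K with hzeta
  have hmin : minpoly ℚ ζ = cyclotomic r ℚ := (cyclotomic_eq_minpoly_rat hζ hrpos).symm
  -- algebra equivalence between AdjoinRoot P and K
  have hPmin : minpoly ℚ (AdjoinRoot.root P) = P := by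
    rw [AdjoinRoot.minpoly_root hPne, hPmonic.leadingCoeff, inv_one, map_one, mul_one]
  set pbA := AdjoinRoot.powerBasis hPne with hpbA
  set pbK := hζ.powerBasis ℚ with hpbK
  have hgen : minpoly ℚ pbA.gen = minpoly ℚ pbK.gen := by
    rw [hpbA, hpbK, AdjoinRoot.powerBasis_gen, IsPrimitiveRoot.powerBasis_gen, hPmin, hPeq, hmin]
  set θ : AdjoinRoot P ≃ₐ[ℚ] K := pbA.equivOfMinpoly pbK hgen with hθ
  have hθroot : θ (AdjoinRoot.root P) = ζ := by
    have h1 : pbA.gen = AdjoinRoot.root P := AdjoinRoot.powerBasis_gen hPne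
    have h2 : pbK.gen = ζ := IsPrimitiveRoot.powerBasis_gen ℚ hζ
    have h3 := pbA.equivOfMinpoly_gen pbK hgen
    rw [h1, h2] at h3
    exact h3
  -- the ring hom from AdjoinRoot P to endomorphisms
  have hker : ∀ a ∈ Ideal.span {P}, (aeval f).toRingHom a = 0 := by
    intro a ha
    rw [Ideal.mem_span_singleton] at ha
    obtain ⟨c, rfl⟩ := ha
    have : aeval f P = 0 := minpoly.aeval ℚ f
    simp [map_mul, this]
  set ψ : AdjoinRoot P →+* Module.End ℚ V := Ideal.Quotient.lift _ (aeval f).toRingHom hker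
    with hψ
  have hψmk : ∀ p : ℚ[X], ψ (AdjoinRoot.mk P p) = aeval f p := fun p => rfl
  set χ : K →+* Module.End ℚ V := ψ.comp (θ.symm : K ≃+* AdjoinRoot P) with hχ
  have hχζ : χ ζ = f := by
    have h0 : θ.symm ζ = AdjoinRoot.root P := by
      rw [← hθroot]; exact θ.symm_apply_apply _
    show ψ (θ.symm ζ) = f
    rw [h0]
    have : AdjoinRoot.root P = AdjoinRoot.mk P X := rfl
    rw [this, hψmk, aeval_X]
  have hχalg : ∀ q : ℚ, χ (algebraMap ℚ K q) = algebraMap ℚ (Module.End ℚ V) q := by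
    intro q
    have h1 : θ.symm (algebraMap ℚ K q) = algebraMap ℚ (AdjoinRoot P) q :=
      θ.symm.commutes q
    show ψ (θ.symm (algebraMap ℚ K q)) = algebraMap ℚ (Module.End ℚ V) q
    rw [h1]
    have h2 : algebraMap ℚ (AdjoinRoot P) q = AdjoinRoot.mk P (C q) := rfl
    rw [h2, hψmk, aeval_C]
  -- V as a K-vector space
  letI : Module K V := Module.compHom V χ
  have hsmul : ∀ (a : K) (v : V), a • v = χ a v := fun a v => rfl
  have halg : ∀ (q : ℚ) (v : V), (algebraMap ℚ K q) • v = q • v := by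
    intro q v
    rw [hsmul, hχalg, Module.algebraMap_end_apply]
  haveI : IsScalarTower ℚ K V := ⟨by
    intro q a v
    have hqa : q • a = algebraMap ℚ K q * a := Algebra.smul_def q a
    rw [hsmul, hsmul, hqa, map_mul, Module.End.mul_apply]
    rw [← hsmul, ← hsmul, halg]⟩
  have hζsmul : ∀ v : V, ζ • v = g v := by
    intro v
    rw [hsmul, hχζ, hfg]
  -- a nonzero vector spans V over K
  obtain ⟨v, hv⟩ := exists_ne (0 : V)
  set W : Submodule K V := Submodule.span K {v} with hWdef
  have hWtop : W = ⊤ := by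
    have hinv : ∀ w ∈ W.restrictScalars ℚ, g w ∈ W.restrictScalars ℚ := by
      intro w hw
      have : ζ • w ∈ W := W.smul_mem ζ hw
      rwa [hζsmul] at this
    rcases hirr (W.restrictScalars ℚ) hinv with h | h
    · exfalso
      have : v ∈ W.restrictScalars ℚ := Submodule.subset_span rfl
      rw [h] at this
      exact hv this
    · rw [← Submodule.restrictScalars_eq_top_iff (S := ℚ)]
      exact h
  -- build the linear equivalence
  have hbij : Function.Bijective (LinearMap.toSpanSingleton K V v) := by
    constructor
    · intro a b hab
      by_contra hne
      have h1 : (a - b) • v = 0 := by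
        rw [sub_smul]
        simpa [LinearMap.toSpanSingleton_apply] using sub_eq_zero_of_eq hab
      have h2 : a - b ≠ 0 := sub_ne_zero_of_ne hne
      apply hv
      calc v = (a - b)⁻¹ • ((a - b) • v) := by
              rw [← mul_smul, inv_mul_cancel₀ h2, one_smul]
        _ = 0 := by rw [h1, smul_zero]
    · intro w
      have : w ∈ LinearMap.range (LinearMap.toSpanSingleton K V v) := by
        rw [← LinearMap.span_singleton_eq_range, ← hWdef, hWtop]
        trivial
      exact this
  set e1 : K ≃ₗ[K] V := LinearEquiv.ofBijective _ hbij with he1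
  set e : V ≃ₗ[ℚ] K := (@LinearEquiv.restrictScalars ℚ K V K _ _ _ _ _ _ _ _
    ⟨fun fₗ c x => map_rat_smul fₗ c x⟩ e1.symm) with he
  refine ⟨r', hrn, ζ, hζ, e, fun w => ?_⟩
  have h1 : g w = ζ • w := (hζsmul w).symm
  rw [he, h1]
  show e1.symm (ζ • w) = ζ * e1.symm w
  rw [map_smul, smul_eq_mul]
end

section
/- Let (M, σ_M) and (N, σ_N) be free Γ-modules and B : M × N → ℤ a Γ-equivariant ℤ-bilinear map, i.e. B(σ_M(x), σ_N(y)) = B(x, y). Then the following are equivalent: (1) B is nondegenerate; (2) (M, N, B) is pointwise polarizable, i.e. there exist an integer j ≥ 1 and a ℤ-linear map λ : M → N, injective with finite cokernel, with λ∘σ_M^j = σ_N^j∘λ, B(x, λ(y)) = B(y, λ(x)) for all x, y ∈ M, and B(x, λ(x)) > 0 for all x ≠ 0; (3) (M, N, B) is polarizable, i.e. there exists such a λ with λ∘σ_M = σ_N∘λ. -/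
open Module LinearMap Finset

namespace Stmt6Aux

lemma exists_smul_right_inverse {ι P Q : Type*} [Fintype ι] [DecidableEq ι]
    [AddCommGroup P] [Module ℤ P] [AddCommGroup Q] [Module ℤ Q]
    (bP : Basis ι ℤ P) (bQ : Basis ι ℤ Q) (f : P →ₗ[ℤ] Q) (hf : Function.Injective f) :
    ∃ (d : ℤ) (ρ : Q →ₗ[ℤ] P), 0 < d ∧ ∀ q, f (ρ q) = d • q := by
  set A := LinearMap.toMatrix bP bQ f with hA
  have hdet : A.det ≠ 0 := by
    intro h0
    obtain ⟨v, hv, hAv⟩ := Matrix.exists_mulVec_eq_zero_iff.mpr h0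
    set x := bP.equivFun.symm v with hxdef
    have hrepr : ⇑(bP.repr x) = v := by
      ext i; rw [← Basis.equivFun_apply, LinearEquiv.apply_symm_apply]
    have h1 := LinearMap.toMatrix_mulVec_repr bP bQ f x
    rw [hrepr, hAv] at h1
    have h2 : bQ.repr (f x) = 0 := Finsupp.ext fun i => (congrFun h1.symm i)
    have h3 : f x = 0 := by
      simpa using (LinearEquiv.map_eq_zero_iff _).mp h2
    have h4 : x = 0 := hf (by simpa using h3)
    exact hv (by rw [← bP.equivFun.apply_symm_apply v, ← hxdef, h4, map_zero])
  refine ⟨A.det ^ 2, Matrix.toLin bQ bP (A.det • A.adjugate), by positivity, fun q => ?_⟩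
  have hcomp : f ∘ₗ Matrix.toLin bQ bP (A.det • A.adjugate)
      = Matrix.toLin bQ bQ (A * (A.det • A.adjugate)) := by
    rw [Matrix.toLin_mul bQ bP bQ, ← Matrix.toLin_toMatrix bP bQ f]
  have hmat : A * (A.det • A.adjugate) = (A.det ^ 2) • (1 : Matrix ι ι ℤ) := by
    rw [Matrix.mul_smul, Matrix.mul_adjugate, smul_smul, sq]
  have h5 := congrArg (fun g => g q) hcomp
  simp only [LinearMap.comp_apply] at h5
  rw [h5, hmat, LinearEquiv.map_smul, Matrix.toLin_one]
  simp only [LinearMap.smul_apply, LinearMap.id_apply]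
  exact int_smul_eq_zsmul _ _ _

section
variable {M N : Type*}
    [AddCommGroup M] [Module ℤ M] [Module.Free ℤ M] [Module.Finite ℤ M]
    [AddCommGroup N] [Module ℤ N] [Module.Free ℤ N] [Module.Finite ℤ N]

lemma key (σM : M ≃ₗ[ℤ] M) (σN : N ≃ₗ[ℤ] N)
    (hσM : ∃ n : ℕ, 0 < n ∧ σM ^ n = 1)
    (B : M →ₗ[ℤ] N →ₗ[ℤ] ℤ)
    (hBeq : ∀ x y, B (σM x) (σN y) = B x y)
    (h1 : ∀ x : M, x ≠ 0 → ∃ y, B x y ≠ 0) (h2 : ∀ y : N, y ≠ 0 → ∃ x, B x y ≠ 0) :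
    ∃ l : M →ₗ[ℤ] N,
      Function.Injective l ∧ Finite (N ⧸ LinearMap.range l) ∧
      (∀ x, l (σM x) = σN (l x)) ∧
      (∀ x y, B x (l y) = B y (l x)) ∧
      (∀ x, x ≠ 0 → 0 < B x (l x)) := by
  classical
  obtain ⟨n, hn, hσn⟩ := hσM
  set ι := Module.Free.ChooseBasisIndex ℤ M with hι
  set b : Basis ι ℤ M := Module.Free.chooseBasis ℤ M with hb
  set C₀ : M →ₗ[ℤ] Module.Dual ℤ M :=
    ∑ i : ι, LinearMap.smulRight (b.coord i) (b.coord i) with hC₀def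
  have hC0 : ∀ x y, C₀ x y = ∑ i : ι, b.repr x i * b.repr y i := by
    intro x y
    simp [hC₀def, LinearMap.sum_apply, Basis.coord_apply, smul_eq_mul]
  set Ψ : M →ₗ[ℤ] Module.Dual ℤ M :=
    ∑ k ∈ Finset.range n,
      ((σM ^ k : M ≃ₗ[ℤ] M) : M →ₗ[ℤ] M).dualMap ∘ₗ C₀ ∘ₗ ((σM ^ k : M ≃ₗ[ℤ] M) : M →ₗ[ℤ] M)
    with hΨdef
  have hΨ : ∀ x y, Ψ x y = ∑ k ∈ Finset.range n, C₀ ((σM ^ k) x) ((σM ^ k) y) := by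
    intro x y
    simp [hΨdef, LinearMap.sum_apply, LinearMap.dualMap_apply]
  have hσpow : ∀ (k : ℕ) (x : M), (σM ^ (k + 1)) x = (σM ^ k) (σM x) := by
    intro k x
    rw [pow_succ]
    rfl
  have hΨinv : ∀ x y, Ψ (σM x) (σM y) = Ψ x y := by
    intro x y
    set F : ℕ → ℤ := fun k => C₀ ((σM ^ k) x) ((σM ^ k) y) with hF
    have hFn : F n = F 0 := by simp [hF, hσn]
    have e1 : Ψ (σM x) (σM y) = ∑ k ∈ Finset.range n, F (k + 1) := by
      rw [hΨ]
      refine Finset.sum_congr rfl fun k _ => ?_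
      simp only [hF]
      rw [hσpow, hσpow]
    have h1' := Finset.sum_range_succ' F n
    have h2' := Finset.sum_range_succ F n
    rw [e1, hΨ x y]
    have : ∑ k ∈ Finset.range n, F (k + 1) = ∑ k ∈ Finset.range n, F k := by omega
    exact this
  have hΨsymm : ∀ x y, Ψ x y = Ψ y x := by
    intro x y
    rw [hΨ, hΨ]
    exact Finset.sum_congr rfl fun k _ => by
      rw [hC0, hC0]; exact Finset.sum_congr rfl fun i _ => mul_comm _ _
  have hC0nonneg : ∀ z, 0 ≤ C₀ z z := by
    intro z
    rw [hC0]
    exact Finset.sum_nonneg fun i _ => mul_self_nonneg _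
  have hC0pos : ∀ z, z ≠ 0 → 0 < C₀ z z := by
    intro z hz
    rw [hC0]
    obtain ⟨i, hi⟩ : ∃ i, b.repr z i ≠ 0 := by
      by_contra h
      push_neg at h
      exact hz (by simpa using b.repr.map_eq_zero_iff.mp (Finsupp.ext h))
    exact Finset.sum_pos' (fun j _ => mul_self_nonneg _)
      ⟨i, Finset.mem_univ i, mul_self_pos.mpr hi⟩
  have hΨselfpos : ∀ x, x ≠ 0 → 0 < Ψ x x := by
    intro x hx
    rw [hΨ]
    refine Finset.sum_pos' (fun k _ => hC0nonneg _) ⟨0, Finset.mem_range.mpr hn, ?_⟩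
    simpa using hC0pos x hx
  have hΨinj : Function.Injective Ψ := by
    rw [← LinearMap.ker_eq_bot]
    rw [LinearMap.ker_eq_bot']
    intro m hm
    by_contra h
    exact (hΨselfpos m h).ne' (by rw [hm]; rfl)
  have hBflip_inj : Function.Injective B.flip := by
    rw [← LinearMap.ker_eq_bot, LinearMap.ker_eq_bot']
    intro z hz
    by_contra h
    obtain ⟨x, hx⟩ := h2 z h
    exact hx (by have := DFunLike.congr_fun hz x; simpa using this)
  have hB_inj : Function.Injective B := by
    rw [← LinearMap.ker_eq_bot, LinearMap.ker_eq_bot']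
    intro x hx
    by_contra h
    obtain ⟨y, hy⟩ := h1 x h
    exact hy (by have := DFunLike.congr_fun hx y; simpa using this)
  set bD : Basis ι ℤ (Module.Dual ℤ M) := b.dualBasis with hbD
  set ιN := Module.Free.ChooseBasisIndex ℤ N with hιN
  set bN : Basis ιN ℤ N := Module.Free.chooseBasis ℤ N with hbN
  set bDN : Basis ιN ℤ (Module.Dual ℤ N) := bN.dualBasis with hbDN
  haveI : Module.Finite ℤ (Module.Dual ℤ M) := Module.Finite.of_basis bD
  haveI : Module.Finite ℤ (Module.Dual ℤ N) := Module.Finite.of_basis bDN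
  have hr1 : finrank ℤ N ≤ finrank ℤ M := by
    have := LinearMap.finrank_le_finrank_of_injective hBflip_inj
    rwa [finrank_eq_card_basis bD, ← finrank_eq_card_basis b] at this
  have hr2 : finrank ℤ M ≤ finrank ℤ N := by
    have := LinearMap.finrank_le_finrank_of_injective hB_inj
    rwa [show finrank ℤ (N →ₗ[ℤ] ℤ) = finrank ℤ (Module.Dual ℤ N) from rfl,
      finrank_eq_card_basis bDN, ← finrank_eq_card_basis bN] at this
  have hcard : Fintype.card ιN = Fintype.card ι := by
    rw [← finrank_eq_card_basis bN, ← finrank_eq_card_basis b]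
    omega
  set bN' : Basis ι ℤ N := bN.reindex (Fintype.equivOfCardEq hcard) with hbN'
  obtain ⟨d1, ρ1, hd1, hρ1⟩ := exists_smul_right_inverse bN' bD B.flip hBflip_inj
  obtain ⟨d2, ρ2, hd2, hρ2⟩ := exists_smul_right_inverse b bD Ψ hΨinj
  set l : M →ₗ[ℤ] N := ρ1 ∘ₗ Ψ with hl
  have hBl : ∀ x y, B x (l y) = d1 * Ψ y x := by
    intro x y
    have h := DFunLike.congr_fun (hρ1 (Ψ y)) x
    simpa [hl, smul_eq_mul] using h
  have hpos : ∀ x, x ≠ 0 → 0 < B x (l x) := by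
    intro x hx
    rw [hBl]
    exact mul_pos hd1 (hΨselfpos x hx)
  have hinj : Function.Injective l := by
    rw [← LinearMap.ker_eq_bot, LinearMap.ker_eq_bot']
    intro m hm
    by_contra h
    have := hpos m h
    rw [hm, map_zero] at this
    exact this.false
  have hsymm : ∀ x y, B x (l y) = B y (l x) := by
    intro x y
    rw [hBl, hBl, hΨsymm]
  have hNdeg : ∀ z : N, (∀ x, B x z = 0) → z = 0 := by
    intro z hz
    by_contra h
    obtain ⟨x, hx⟩ := h2 z h
    exact hx (hz x)
  have hequiv : ∀ y, l (σM y) = σN (l y) := by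
    intro y
    have hzero : ∀ x, B x (l (σM y) - σN (l y)) = 0 := by
      intro x
      rw [map_sub]
      have e1 : B x (l (σM y)) = d1 * Ψ y (σM.symm x) := by
        rw [hBl]
        congr 1
        have := hΨinv y (σM.symm x)
        rw [σM.apply_symm_apply] at this
        exact this
      have e2 : B x (σN (l y)) = d1 * Ψ y (σM.symm x) := by
        have h3 : B x (σN (l y)) = B (σM.symm x) (l y) := by
          conv_lhs => rw [← σM.apply_symm_apply x]
          rw [hBeq]
        rw [h3, hBl]
      rw [e1, e2, sub_self]
    exact sub_eq_zero.mp (hNdeg _ hzero)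
  have hlz : ∀ y : N, ((d1 * d2) : ℤ) • y ∈ LinearMap.range l := by
    intro y
    refine ⟨ρ2 (B.flip y), hBflip_inj ?_⟩
    calc B.flip (l (ρ2 (B.flip y))) = d1 • Ψ (ρ2 (B.flip y)) := hρ1 _
      _ = d1 • (d2 • B.flip y) := by rw [hρ2]
      _ = B.flip ((d1 * d2) • y) := by
          ext x
          simp [smul_smul, mul_assoc]
  have htor : Module.IsTorsion ℤ (N ⧸ LinearMap.range l) := by
    intro q
    obtain ⟨y, rfl⟩ := Submodule.Quotient.mk_surjective _ q
    refine ⟨⟨d1 * d2, mem_nonZeroDivisors_of_ne_zero (by positivity)⟩, ?_⟩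
    rw [Submonoid.smul_def]
    show (d1 * d2 : ℤ) • Submodule.Quotient.mk y = 0
    rw [← Submodule.Quotient.mk_smul]
    exact (Submodule.Quotient.mk_eq_zero _).mpr (hlz y)
  have hST : @IsScalarTower ℤ ℤ N _ ‹Module ℤ N›.toDistribMulAction.toMulAction.toSMul
      ‹Module ℤ N›.toDistribMulAction.toMulAction.toSMul :=
    @IsScalarTower.mk ℤ ℤ N _ ‹Module ℤ N›.toDistribMulAction.toMulAction.toSMul
      ‹Module ℤ N›.toDistribMulAction.toMulAction.toSMul
      (fun a b n => @mul_smul ℤ N _ ‹Module ℤ N›.toDistribMulAction.toMulAction.toSemigroupAction a b n)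
  have hq := @Module.Finite.quotient ℤ ℤ N _ _ _ ‹Module ℤ N› ‹Module ℤ N› _ hST _
    (LinearMap.range l)
  haveI : Subsingleton (Module ℤ (N ⧸ LinearMap.range l)) :=
    AddCommGroup.uniqueIntModule.instSubsingleton
  have hq' : @Module.Finite ℤ (N ⧸ LinearMap.range l) _ _ (AddCommGroup.toIntModule _) := by
    convert hq using 1
    rfl
  have hfin : Finite (N ⧸ LinearMap.range l) := @Module.finite_of_fg_torsion _ _ _ hq' htor
  exact ⟨l, hinj, hfin, hequiv, hsymm, hpos⟩


lemma two_to_one (σM : M ≃ₗ[ℤ] M) (σN : N ≃ₗ[ℤ] N) (B : M →ₗ[ℤ] N →ₗ[ℤ] ℤ)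
    (j : ℕ) (hj : 1 ≤ j) (l : M →ₗ[ℤ] N)
    (hinj : Function.Injective l) (hfin : Finite (N ⧸ LinearMap.range l))
    (heq : ∀ x, l ((σM ^ j) x) = (σN ^ j) (l x))
    (hsym : ∀ x y, B x (l y) = B y (l x))
    (hpos : ∀ x, x ≠ 0 → 0 < B x (l x)) :
    (∀ x : M, x ≠ 0 → ∃ y, B x y ≠ 0) ∧ (∀ y : N, y ≠ 0 → ∃ x, B x y ≠ 0) := by
  constructor
  · intro x hx
    exact ⟨l x, (hpos x hx).ne'⟩
  · intro y hy
    by_contra h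
    push_neg at h
    set q : N ⧸ LinearMap.range l := Submodule.Quotient.mk y with hq
    have hk : 0 < addOrderOf q := addOrderOf_pos q
    set k := addOrderOf q with hkdef
    have hq0 : k • q = 0 := addOrderOf_nsmul_eq_zero q
    have hmem : k • y ∈ LinearMap.range l := by
      rw [← Submodule.Quotient.mk_eq_zero]
      have : (Submodule.Quotient.mk (k • y) : N ⧸ LinearMap.range l) = k • q := by
        rw [hq]
        exact (map_nsmul (Submodule.mkQ (LinearMap.range l)) k y : _)
      rw [this, hq0]
    obtain ⟨z, hz⟩ := hmem
    have hz0 : z = 0 := by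
      by_contra hz0
      have hp := hpos z hz0
      rw [hz] at hp
      have : B z (k • y) = k • (B z y) := map_nsmul (B z) k y
      rw [this, h z, smul_zero] at hp
      exact hp.false
    rw [hz0, map_zero] at hz
    set bb := Module.Free.chooseBasis ℤ N with hbb
    have h7 : bb.repr (k • y) = k • bb.repr y := map_nsmul bb.repr k y
    rw [← hz, map_zero] at h7
    have h6 : bb.repr y = 0 := by
      ext i
      have h9 := congrFun (congrArg (⇑) h7.symm) i
      simp only [Finsupp.smul_apply, Finsupp.coe_zero, Pi.zero_apply, nsmul_eq_mul,
        mul_eq_zero] at h9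
      simp only [Finsupp.coe_zero, Pi.zero_apply]
      rcases h9 with h9 | h9
      · exact absurd (by exact_mod_cast h9) hk.ne'
      · exact h9
    exact hy (by simpa using bb.repr.map_eq_zero_iff.mp h6)

end

end Stmt6Aux

/-- For a `Γ`-equivariant `ℤ`-bilinear pairing `B : M × N → ℤ` between free
`Γ`-modules, the following are equivalent: (1) `B` is nondegenerate; (2) `(M, N, B)` is
pointwise polarizable (there are `j ≥ 1` and `λ : M → N` injective with finite cokernel,
equivariant for the `j`-th powers of the automorphisms, symmetric and positive definite with
respect to `B`); (3) `(M, N, B)` is polarizable (such a `λ` exists with `j = 1`). -/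
theorem stmt_6 {M N : Type*}
    [AddCommGroup M] [Module ℤ M] [Module.Free ℤ M] [Module.Finite ℤ M]
    [AddCommGroup N] [Module ℤ N] [Module.Free ℤ N] [Module.Finite ℤ N]
    (σM : M ≃ₗ[ℤ] M) (σN : N ≃ₗ[ℤ] N)
    (hσM : ∃ n : ℕ, 0 < n ∧ σM ^ n = 1) (hσN : ∃ n : ℕ, 0 < n ∧ σN ^ n = 1)
    (B : M →ₗ[ℤ] N →ₗ[ℤ] ℤ)
    (hBeq : ∀ x y, B (σM x) (σN y) = B x y) :
    (((∀ x : M, x ≠ 0 → ∃ y, B x y ≠ 0) ∧ (∀ y : N, y ≠ 0 → ∃ x, B x y ≠ 0)) ↔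
      (∃ j : ℕ, 1 ≤ j ∧ ∃ l : M →ₗ[ℤ] N,
        Function.Injective l ∧ Finite (N ⧸ LinearMap.range l) ∧
        (∀ x, l ((σM ^ j) x) = (σN ^ j) (l x)) ∧
        (∀ x y, B x (l y) = B y (l x)) ∧
        (∀ x, x ≠ 0 → 0 < B x (l x)))) ∧
    ((∃ j : ℕ, 1 ≤ j ∧ ∃ l : M →ₗ[ℤ] N,
        Function.Injective l ∧ Finite (N ⧸ LinearMap.range l) ∧
        (∀ x, l ((σM ^ j) x) = (σN ^ j) (l x)) ∧
        (∀ x y, B x (l y) = B y (l x)) ∧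
        (∀ x, x ≠ 0 → 0 < B x (l x))) ↔
      (∃ l : M →ₗ[ℤ] N,
        Function.Injective l ∧ Finite (N ⧸ LinearMap.range l) ∧
        (∀ x, l (σM x) = σN (l x)) ∧
        (∀ x y, B x (l y) = B y (l x)) ∧
        (∀ x, x ≠ 0 → 0 < B x (l x)))) := by
  have h13 := Stmt6Aux.key σM σN hσM B hBeq
  have h32 : (∃ l : M →ₗ[ℤ] N,
        Function.Injective l ∧ Finite (N ⧸ LinearMap.range l) ∧
        (∀ x, l (σM x) = σN (l x)) ∧
        (∀ x y, B x (l y) = B y (l x)) ∧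
        (∀ x, x ≠ 0 → 0 < B x (l x))) →
      (∃ j : ℕ, 1 ≤ j ∧ ∃ l : M →ₗ[ℤ] N,
        Function.Injective l ∧ Finite (N ⧸ LinearMap.range l) ∧
        (∀ x, l ((σM ^ j) x) = (σN ^ j) (l x)) ∧
        (∀ x y, B x (l y) = B y (l x)) ∧
        (∀ x, x ≠ 0 → 0 < B x (l x))) := by
    rintro ⟨l, hinj, hfin, heq, hsym, hpos⟩
    exact ⟨1, le_refl 1, l, hinj, hfin,
      fun x => by simpa [pow_one] using heq x, hsym, hpos⟩
  have h21 : (∃ j : ℕ, 1 ≤ j ∧ ∃ l : M →ₗ[ℤ] N,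
        Function.Injective l ∧ Finite (N ⧸ LinearMap.range l) ∧
        (∀ x, l ((σM ^ j) x) = (σN ^ j) (l x)) ∧
        (∀ x y, B x (l y) = B y (l x)) ∧
        (∀ x, x ≠ 0 → 0 < B x (l x))) →
      ((∀ x : M, x ≠ 0 → ∃ y, B x y ≠ 0) ∧ (∀ y : N, y ≠ 0 → ∃ x, B x y ≠ 0)) := by
    rintro ⟨j, hj, l, hinj, hfin, heq, hsym, hpos⟩
    exact Stmt6Aux.two_to_one σM σN B j hj l hinj hfin heq hsym hpos
  constructor
  · constructor
    · intro h
      exact h32 (h13 h.1 h.2)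
    · exact h21
  · constructor
    · intro h
      obtain ⟨h1, h2⟩ := h21 h
      exact h13 h1 h2
    · exact h32
end

section
/- Let k ≥ 1, let (M, σ_M) and (N, σ_N) be free Γ-modules, and let B = (B_1, …, B_k) : M × N → ℤ^k be a Γ-equivariant ℤ-bilinear map (B(σ_M(x), σ_N(y)) = B(x, y)). Assume (M, N, B) is pointwise polarizable: there exist an integer j ≥ 1 and a ℤ-linear map λ : M → N, injective with finite cokernel, with λ∘σ_M^j = σ_N^j∘λ, B(x, λ(y)) = B(y, λ(x)) in ℤ^k for all x, y ∈ M, and for every x ≠ 0 the vector B(x, λ(x)) has all coordinates ≥ 0 and is not the zero vector. Then (M, σ_M) is a simple free Γ-module if and only if (N, σ_N) is a simple free Γ-module. -/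
open Module

private def perpSub {M N : Type*} [AddCommGroup M] [Module ℤ M] [AddCommGroup N] [Module ℤ N]
    {k : ℕ} (B : M →ₗ[ℤ] N →ₗ[ℤ] (Fin k → ℤ)) (W : Submodule ℤ N) (i : Fin k) :
    Submodule ℤ M where
  carrier := {x | ∀ y ∈ W, B x y i = 0}
  zero_mem' := by intro y hy; simp
  add_mem' := by intro a b ha hb y hy; simp [ha y hy, hb y hy]
  smul_mem' := by intro c x hx y hy; simp [hx y hy]

private lemma exists_nsmul_mem {N : Type*} [AddCommGroup N] [Module ℤ N]
    (W : Submodule ℤ N) (h : Finite (N ⧸ W)) (y : N) :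
    ∃ m : ℕ, 0 < m ∧ (m : ℤ) • y ∈ W := by
  obtain rfl : ‹Module ℤ N› = AddCommGroup.toIntModule N := AddCommGroup.uniqueIntModule.uniq _
  obtain ⟨m, hm, hm0⟩ := (isOfFinAddOrder_of_finite (W.mkQ y)).exists_nsmul_eq_zero
  refine ⟨m, hm, ?_⟩
  have h2 : W.mkQ ((m : ℤ) • y) = 0 := by
    rw [Nat.cast_smul_eq_nsmul, map_nsmul, hm0]
  rwa [← Submodule.Quotient.mk_eq_zero, ← Submodule.mkQ_apply]

private lemma finite_quotient_iff {N : Type*} [AddCommGroup N] [Module ℤ N]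
    [Module.Free ℤ N] [Module.Finite ℤ N] (W : Submodule ℤ N) :
    Finite (N ⧸ W) ↔ finrank ℤ W = finrank ℤ N := by
  obtain rfl : ‹Module ℤ N› = AddCommGroup.toIntModule N := AddCommGroup.uniqueIntModule.uniq _
  haveI : Module.Finite ℤ (N ⧸ W) := Module.Finite.quotient ℤ W
  have hadd : finrank ℤ (N ⧸ W) + finrank ℤ W = finrank ℤ N :=
    W.finrank_quotient_add_finrank
  constructor
  · intro h
    have ht : Module.IsTorsion ℤ (N ⧸ W) := by
      intro x
      obtain ⟨m, hm, hx⟩ := (isOfFinAddOrder_of_finite x).exists_nsmul_eq_zero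
      refine ⟨⟨(m : ℤ), mem_nonZeroDivisors_of_ne_zero (by exact_mod_cast hm.ne')⟩, ?_⟩
      simpa [Nat.cast_smul_eq_nsmul] using hx
    have h0 : finrank ℤ (N ⧸ W) = 0 := Module.finrank_eq_zero_iff_isTorsion.mpr ht
    omega
  · intro h
    have h0 : finrank ℤ (N ⧸ W) = 0 := by omega
    exact Module.finite_of_fg_torsion _ (Module.finrank_eq_zero_iff_isTorsion.mp h0)

private lemma symm_mem {N : Type*} [AddCommGroup N] [Module ℤ N] (σ : N ≃ₗ[ℤ] N)
    (hσ : ∃ n : ℕ, 0 < n ∧ σ ^ n = 1) (W : Submodule ℤ N)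
    (hW : ∀ y ∈ W, σ y ∈ W) : ∀ y ∈ W, σ.symm y ∈ W := by
  obtain ⟨n, hn, h1⟩ := hσ
  have hpow : ∀ (m : ℕ), ∀ y ∈ W, (σ ^ m) y ∈ W := by
    intro m
    induction m with
    | zero => intro y hy; simpa using hy
    | succ p ih =>
        intro y hy
        have h2 : (σ ^ (p + 1)) y = (σ ^ p) (σ y) := by
          rw [pow_succ]; rfl
        rw [h2]; exact ih _ (hW y hy)
  intro y hy
  have h2 : σ ((σ ^ (n - 1)) y) = y := by
    have h3 : σ * σ ^ (n - 1) = 1 := by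
      rw [← pow_succ', Nat.sub_add_cancel hn]; exact h1
    calc σ ((σ ^ (n - 1)) y) = (σ * σ ^ (n - 1)) y := rfl
    _ = y := by rw [h3]; rfl
  have h4 : σ.symm y = (σ ^ (n - 1)) y := by
    conv_lhs => rw [← h2, σ.symm_apply_apply]
  rw [h4]
  exact hpow (n - 1) y hy

private lemma aux_simple {M N : Type*}
    [AddCommGroup M] [Module ℤ M] [Module.Free ℤ M] [Module.Finite ℤ M]
    [AddCommGroup N] [Module ℤ N] [Module.Free ℤ N] [Module.Finite ℤ N]
    {k : ℕ} (σM : M ≃ₗ[ℤ] M) (σN : N ≃ₗ[ℤ] N)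
    (hσN : ∃ n : ℕ, 0 < n ∧ σN ^ n = 1)
    (B : M →ₗ[ℤ] N →ₗ[ℤ] (Fin k → ℤ))
    (hBeq : ∀ x y, B (σM x) (σN y) = B x y)
    (hndR : ∀ y : N, y ≠ 0 → ∃ x, B x y ≠ 0)
    (hrank : finrank ℤ M = finrank ℤ N)
    (hM : ∀ W : Submodule ℤ M, (∀ x ∈ W, σM x ∈ W) → W = ⊥ ∨ Finite (M ⧸ W))
    (W : Submodule ℤ N) (hW : ∀ y ∈ W, σN y ∈ W) : W = ⊥ ∨ Finite (N ⧸ W) := by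
  obtain rfl : ‹Module ℤ M› = AddCommGroup.toIntModule M := AddCommGroup.uniqueIntModule.uniq _
  obtain rfl : ‹Module ℤ N› = AddCommGroup.toIntModule N := AddCommGroup.uniqueIntModule.uniq _
  by_cases hbot : W = ⊥
  · exact Or.inl hbot
  right
  have hWsymm := symm_mem σN hσN W hW
  have hstab : ∀ i, ∀ x ∈ perpSub B W i, σM x ∈ perpSub B W i := by
    intro i x hx y hy
    have h0 : y = σN (σN.symm y) := (σN.apply_symm_apply y).symm
    rw [h0, hBeq]
    exact hx _ (hWsymm y hy)
  have hex : ∃ i, perpSub B W i = ⊥ := by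
    by_contra hcon
    push_neg at hcon
    have hfin : ∀ i, Finite (M ⧸ perpSub B W i) := fun i =>
      (hM _ (hstab i)).resolve_left (hcon i)
    have hker : LinearMap.ker (LinearMap.pi (fun i => (perpSub B W i).mkQ)) =
        ⨅ i, perpSub B W i := by
      rw [LinearMap.ker_pi]
      simp [Submodule.ker_mkQ]
    have hinj : Function.Injective
        ((⨅ i, perpSub B W i).liftQ (LinearMap.pi fun i => (perpSub B W i).mkQ)
          (le_of_eq hker.symm)) := by
      rw [← LinearMap.ker_eq_bot]
      exact Submodule.ker_liftQ_eq_bot _ _ _ (le_of_eq hker)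
    haveI : ∀ i, Finite (M ⧸ perpSub B W i) := hfin
    have hQfin : Finite (M ⧸ ⨅ i, perpSub B W i) := Finite.of_injective _ hinj
    obtain ⟨y0, hy0W, hy0⟩ := W.ne_bot_iff.mp hbot
    obtain ⟨x0, hx0⟩ := hndR y0 hy0
    obtain ⟨m, hm, hmem⟩ := exists_nsmul_mem _ hQfin x0
    apply hx0
    funext i
    have h1 : (m : ℤ) • x0 ∈ perpSub B W i := (Submodule.mem_iInf _).mp hmem i
    have h2 := h1 y0 hy0W
    have h3 : (m : ℤ) * B x0 y0 i = 0 := by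
      have h4 : B ((m : ℤ) • x0) = (m : ℤ) • B x0 := map_smul B _ _
      have h5 : B ((m : ℤ) • x0) y0 i = (m : ℤ) * B x0 y0 i := by
        rw [h4]; simp [smul_eq_mul]
      rw [← h5]; exact h2
    have hm' : (m : ℤ) ≠ 0 := by exact_mod_cast hm.ne'
    have h6 := (mul_eq_zero.mp h3).resolve_left hm'
    simpa using h6
  obtain ⟨i0, hi0⟩ := hex
  haveI : IsNoetherian ℤ N := isNoetherian_of_isNoetherianRing_of_finite ℤ N
  haveI hWfin : Module.Finite ℤ W :=
    Module.Finite.iff_fg.mpr (IsNoetherian.noetherian W)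
  haveI hWfree : Module.Free ℤ W := inferInstance
  let g : M →ₗ[ℤ] (W →ₗ[ℤ] ℤ) :=
    { toFun := fun x => (LinearMap.proj i0).comp ((B x).comp W.subtype)
      map_add' := by intro a b; ext y; simp
      map_smul' := by intro c a; ext y; simp }
  have hginj : Function.Injective g := by
    rw [← LinearMap.ker_eq_bot, eq_bot_iff]
    intro x hx
    have hxp : x ∈ perpSub B W i0 := by
      intro y hy
      have h7 := LinearMap.congr_fun (LinearMap.mem_ker.mp hx) ⟨y, hy⟩
      simpa [g] using h7
    rw [hi0] at hxp
    simpa using hxp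
  have h1 : finrank ℤ M ≤ finrank ℤ (W →ₗ[ℤ] ℤ) :=
    LinearMap.finrank_le_finrank_of_injective hginj
  have h2 : finrank ℤ (W →ₗ[ℤ] ℤ) = finrank ℤ W := by
    rw [Module.finrank_linearMap, finrank_self, mul_one]
  have h3 : finrank ℤ W ≤ finrank ℤ N := W.finrank_le
  rw [finite_quotient_iff W]
  omega

/-- Let `B : M × N → ℤ^k` be a `Γ`-equivariant bilinear pairing between
free `Γ`-modules which is pointwise polarizable (there is `j ≥ 1` and `λ : M → N` injective
with finite cokernel, equivariant for the `j`-th powers, symmetric with respect to `B`, and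
`B(x, λ x)` is a nonzero vector with nonnegative coordinates for every `x ≠ 0`).  Then
`(M, σ_M)` is a simple free `Γ`-module if and only if `(N, σ_N)` is. -/
theorem stmt_14 {M N : Type*}
    [AddCommGroup M] [Module ℤ M] [Module.Free ℤ M] [Module.Finite ℤ M]
    [AddCommGroup N] [Module ℤ N] [Module.Free ℤ N] [Module.Finite ℤ N]
    (k : ℕ) (hk : 1 ≤ k)
    (σM : M ≃ₗ[ℤ] M) (σN : N ≃ₗ[ℤ] N)
    (hσM : ∃ n : ℕ, 0 < n ∧ σM ^ n = 1) (hσN : ∃ n : ℕ, 0 < n ∧ σN ^ n = 1)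
    (B : M →ₗ[ℤ] N →ₗ[ℤ] (Fin k → ℤ))
    (hBeq : ∀ x y, B (σM x) (σN y) = B x y)
    (hpp : ∃ j : ℕ, 1 ≤ j ∧ ∃ l : M →ₗ[ℤ] N,
      Function.Injective l ∧ Finite (N ⧸ LinearMap.range l) ∧
      (∀ x, l ((σM ^ j) x) = (σN ^ j) (l x)) ∧
      (∀ x y, B x (l y) = B y (l x)) ∧
      (∀ x : M, x ≠ 0 → (∀ i, 0 ≤ B x (l x) i) ∧ B x (l x) ≠ 0)) :
    ((Nontrivial M ∧
        ∀ W : Submodule ℤ M, (∀ x ∈ W, σM x ∈ W) → W = ⊥ ∨ Finite (M ⧸ W)) ↔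
      (Nontrivial N ∧
        ∀ W : Submodule ℤ N, (∀ x ∈ W, σN x ∈ W) → W = ⊥ ∨ Finite (N ⧸ W))) := by
  obtain rfl : ‹Module ℤ M› = AddCommGroup.toIntModule M := AddCommGroup.uniqueIntModule.uniq _
  obtain rfl : ‹Module ℤ N› = AddCommGroup.toIntModule N := AddCommGroup.uniqueIntModule.uniq _
  obtain ⟨j, hj, l, hinj, hcok, hcomm, hsym, hpos⟩ := hpp
  have hrank : finrank ℤ M = finrank ℤ N := by
    have h1 : finrank ℤ M = finrank ℤ (LinearMap.range l) :=
      (LinearEquiv.ofInjective l hinj).finrank_eq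
    have h2 : finrank ℤ (LinearMap.range l) = finrank ℤ N :=
      (finite_quotient_iff _).mp hcok
    omega
  have hndL : ∀ x : M, x ≠ 0 → ∃ y, B x y ≠ 0 := fun x hx => ⟨l x, (hpos x hx).2⟩
  have hndR : ∀ y : N, y ≠ 0 → ∃ x, B x y ≠ 0 := by
    intro y hy
    obtain ⟨m, hm, hmem⟩ := exists_nsmul_mem _ hcok y
    obtain ⟨z, hz⟩ := hmem
    have hm' : (m : ℤ) ≠ 0 := by exact_mod_cast hm.ne'
    have hzne : z ≠ 0 := by
      rintro rfl
      rw [map_zero] at hz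
      exact hy ((smul_eq_zero.mp hz.symm).resolve_left hm')
    refine ⟨z, fun hc => ?_⟩
    have h0 : B z (l z) = 0 := by
      rw [hz, map_smul, hc, smul_zero]
    exact (hpos z hzne).2 h0
  have htrans : Nontrivial M ↔ Nontrivial N := by
    rw [← Module.finrank_pos_iff (R := ℤ) (M := M), ← Module.finrank_pos_iff (R := ℤ) (M := N),
      hrank]
  constructor
  · rintro ⟨hMnt, hMs⟩
    exact ⟨htrans.mp hMnt, aux_simple σM σN hσN B hBeq hndR hrank hMs⟩
  · rintro ⟨hNnt, hNs⟩
    refine ⟨htrans.mpr hNnt, aux_simple σN σM hσM B.flip ?_ ?_ hrank.symm hNs⟩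
    · intro y x
      simp only [LinearMap.flip_apply]
      exact hBeq x y
    · intro x hx
      obtain ⟨y, hy⟩ := hndL x hx
      exact ⟨y, by simpa [LinearMap.flip_apply] using hy⟩
end

section
/- Let k and r be positive integers, K_r = ℚ(ζ_r) with ring of integers 𝓞_r = ℤ[ζ_r], ζ_r a primitive r-th root of unity, and c a ℚ-algebra automorphism of K_r with c(ζ_r) = ζ_r^{-1}. Let t_1, …, t_k ∈ 𝓞_r and let t ∈ K_r be nonzero with Tr(x · t · c(y)) ∈ ℤ for all x, y ∈ 𝓞_r. For each i define B_i(x, y) = Tr(x · t_i · c(t) · c(y)) for x, y ∈ 𝓞_r. Then the following are equivalent: (a) for each i, B_i(x, y) = B_i(y, x) for all x, y and B_i(x, x) ≥ 0 for all x, and moreover Σ_{i=1}^k B_i(x, x) > 0 for all x ≠ 0; (b) for each i, the element t_i · c(t) is either zero or totally positive, and Σ_{i=1}^k t_i · c(t) is totally positive. -/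
open Complex Polynomial Finset

namespace Stmt17Aux

variable {K : Type*} [Field K] [Algebra ℚ K]

theorem ext_adjoin {L : Type*} [CommRing L] [Algebra ℚ L] {ζ : K}
    (htop : Algebra.adjoin ℚ ({ζ} : Set K) = ⊤)
    (σ τ : K →ₐ[ℚ] L) (h : σ ζ = τ ζ) : σ = τ := by
  exact AlgHom.ext_of_adjoin_eq_top htop (by simpa [Set.EqOn] using h)


theorem conj_emb {ζ : K} (htop : Algebra.adjoin ℚ ({ζ} : Set K) = ⊤)
    {r : ℕ} (hr : 0 < r) (hζr : ζ ^ r = 1)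
    {c : K ≃ₐ[ℚ] K} (hc : c ζ = ζ⁻¹) (σ : K →ₐ[ℚ] ℂ) (x : K) :
    σ (c x) = starRingEnd ℂ (σ x) := by
  have h1 : σ ζ ^ r = 1 := by rw [← map_pow, hζr, map_one]
  have habs : ‖σ ζ‖ = 1 := by
    exact Complex.norm_eq_one_of_pow_eq_one h1 hr.ne'
  have hζ0 : σ ζ ≠ 0 := by
    intro h; rw [h] at habs; simp at habs
  have hconjζ : starRingEnd ℂ (σ ζ) = (σ ζ)⁻¹ := by
    have h2 : σ ζ * starRingEnd ℂ (σ ζ) = 1 := by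
      rw [Complex.mul_conj, ← Complex.sq_norm, habs]; norm_num
    field_simp
    linear_combination h2
  have key : σ.comp c.toAlgHom =
      ((Complex.conjAe.toAlgHom.restrictScalars ℚ).comp σ) := by
    apply ext_adjoin htop
    simp [hc, map_inv₀, hconjζ, Complex.conjAe]
  exact DFunLike.congr_fun key x


theorem cc_id {ζ : K} (htop : Algebra.adjoin ℚ ({ζ} : Set K) = ⊤)
    {c : K ≃ₐ[ℚ] K} (hc : c ζ = ζ⁻¹) (x : K) : c (c x) = x := by
  have key : (c.toAlgHom.comp c.toAlgHom) = AlgHom.id ℚ K := by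
    apply ext_adjoin htop
    simp [hc, map_inv₀]
  exact DFunLike.congr_fun key x


variable [FiniteDimensional ℚ K]

theorem trace_cast (u : K) :
    ((Algebra.trace ℚ K u : ℚ) : ℂ) = ∑ σ : K →ₐ[ℚ] ℂ, σ u := by
  rw [← eq_ratCast (algebraMap ℚ ℂ), trace_eq_sum_embeddings (E := ℂ)]


theorem trace_ker {ζ : K} (htop : Algebra.adjoin ℚ ({ζ} : Set K) = ⊤)
    (u : K) (h : ∀ m : ℕ, Algebra.trace ℚ K (ζ ^ m * u) = 0) : u = 0 := by
  apply (traceForm_nondegenerate ℚ K).1 u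
  intro v
  have hv : v ∈ Submodule.span ℚ ((Submonoid.closure ({ζ} : Set K) : Submonoid K) : Set K) := by
    rw [← Algebra.adjoin_eq_span, htop]; trivial
  rw [Algebra.traceForm_apply]
  induction hv using Submodule.span_induction with
  | mem w hw =>
      obtain ⟨m, rfl⟩ := Submonoid.mem_closure_singleton.mp hw
      rw [mul_comm]; exact h m
  | zero => simp
  | add w₁ w₂ _ _ h1 h2 => rw [mul_add, map_add, h1, h2, add_zero]
  | smul q w _ hw => rw [Algebra.mul_smul_comm, map_smul, hw, smul_zero]


theorem trace_formula {c : K ≃ₐ[ℚ] K}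
    (hconj : ∀ (σ : K →ₐ[ℚ] ℂ) (x : K), σ (c x) = starRingEnd ℂ (σ x))
    (s x : K) :
    ((Algebra.trace ℚ K (x * s * c x) : ℚ) : ℝ) =
      ∑ σ : K →ₐ[ℚ] ℂ, (σ s).re * Complex.normSq (σ x) := by
  have key : ((Algebra.trace ℚ K (x * s * c x) : ℚ) : ℂ)
      = ∑ σ : K →ₐ[ℚ] ℂ, σ s * (Complex.normSq (σ x) : ℂ) := by
    rw [← eq_ratCast (algebraMap ℚ ℂ), trace_eq_sum_embeddings (E := ℂ)]
    refine Finset.sum_congr rfl fun σ _ => ?_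
    rw [map_mul, map_mul, hconj σ x, mul_comm (σ x) (σ s), mul_assoc, Complex.mul_conj]
  simpa using congrArg Complex.re key


theorem step_b {ζ : K} (htop : Algebra.adjoin ℚ ({ζ} : Set K) = ⊤)
    {c : K ≃ₐ[ℚ] K}
    (hconj : ∀ (σ : K →ₐ[ℚ] ℂ) (x : K), σ (c x) = starRingEnd ℂ (σ x))
    (hcc : ∀ x : K, c (c x) = x)
    {s : K}
    (hpsd : ∀ x : Algebra.adjoin ℤ ({ζ} : Set K),
      0 ≤ Algebra.trace ℚ K ((x : K) * s * c (x : K)))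
    (σ₀ : K →ₐ[ℚ] ℂ) : 0 ≤ (σ₀ s).re := by
  classical
  set n := Fintype.card (K →ₐ[ℚ] ℂ) with hn
  set f : (Fin n → ℝ) → ℝ := fun a =>
    ∑ σ : K →ₐ[ℚ] ℂ, (σ s).re *
      Complex.normSq (∑ m : Fin n, ((a m : ℝ) : ℂ) * (σ ζ) ^ (m : ℕ)) with hf
  -- nonnegativity at rational points
  have hfq : ∀ a : Fin n → ℚ, 0 ≤ f (fun m => (a m : ℝ)) := by
    intro a
    set d : ℤ := ∏ m : Fin n, ((a m).den : ℤ) with hd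
    have hdpos : 0 < d := Finset.prod_pos fun m _ => Int.natCast_pos.mpr (a m).pos
    have hb : ∀ m : Fin n, ∃ z : ℤ, (z : ℚ) = (d : ℚ) * a m := by
      intro m
      obtain ⟨e, he⟩ := Finset.dvd_prod_of_mem (fun m : Fin n => ((a m).den : ℤ))
        (Finset.mem_univ m)
      refine ⟨(a m).num * e, ?_⟩
      rw [← hd] at he
      push_cast [he]
      rw [mul_comm ((a m).den : ℚ) (e : ℚ), mul_assoc, mul_comm ((a m).den : ℚ) (a m),
        Rat.mul_den_eq_num]
      ring
    choose b hbz using hb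
    set y : K := ∑ m : Fin n, (b m : ℤ) • ζ ^ (m : ℕ) with hy
    have hymem : y ∈ Algebra.adjoin ℤ ({ζ} : Set K) := by
      refine Subalgebra.sum_mem _ fun m _ => Subalgebra.zsmul_mem _ ?_ _
      exact pow_mem (Algebra.self_mem_adjoin_singleton ℤ ζ) _
    have h1 : 0 ≤ Algebra.trace ℚ K (y * s * c y) := hpsd ⟨y, hymem⟩
    have h4 := trace_formula hconj s y
    have h5 : ∀ σ : K →ₐ[ℚ] ℂ,
        σ y = (d : ℂ) * ∑ m : Fin n, ((a m : ℝ) : ℂ) * (σ ζ) ^ (m : ℕ) := by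
      intro σ
      rw [hy, map_sum, Finset.mul_sum]
      refine Finset.sum_congr rfl fun m _ => ?_
      rw [map_zsmul, map_pow, zsmul_eq_mul, ← mul_assoc]
      congr 1
      have : ((b m : ℚ) : ℂ) = ((d : ℚ) : ℂ) * ((a m : ℚ) : ℂ) := by
        exact_mod_cast congrArg (fun q : ℚ => (q : ℂ)) (hbz m)
      push_cast at this ⊢
      linear_combination this
    have h6 : ((Algebra.trace ℚ K (y * s * c y) : ℚ) : ℝ)
        = ((d : ℝ) * d) * f (fun m => (a m : ℝ)) := by
      rw [h4, hf]
      simp only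
      rw [Finset.mul_sum]
      refine Finset.sum_congr rfl fun σ _ => ?_
      rw [h5 σ, Complex.normSq_mul]
      have : Complex.normSq (d : ℂ) = (d : ℝ) * d := by
        simp [Complex.normSq_apply]
      rw [this]
      ring
    have h7 : 0 ≤ ((d : ℝ) * d) * f (fun m => (a m : ℝ)) := by
      rw [← h6]; exact_mod_cast h1
    have hdd : (0 : ℝ) < (d : ℝ) * d := by positivity
    nlinarith [h7, hdd]
  -- continuity
  have hfc : Continuous f := by
    rw [hf]
    refine continuous_finset_sum _ fun σ _ => Continuous.mul continuous_const ?_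
    exact Complex.continuous_normSq.comp <| continuous_finset_sum _ fun m _ =>
      ((Complex.continuous_ofReal.comp (continuous_apply m)).mul continuous_const)
  -- density
  have hfnn : ∀ a : Fin n → ℝ, 0 ≤ f a := by
    have hdense : Dense (Set.pi Set.univ fun _ : Fin n => Set.range ((↑) : ℚ → ℝ)) :=
      dense_pi Set.univ fun i _ => Rat.denseRange_cast
    have hclosed : IsClosed {a : Fin n → ℝ | 0 ≤ f a} :=
      isClosed_le continuous_const hfc
    have hsub : (Set.pi Set.univ fun _ : Fin n => Set.range ((↑) : ℚ → ℝ))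
        ⊆ {a : Fin n → ℝ | 0 ≤ f a} := by
      intro a ha
      choose b hb using fun m => ha m (Set.mem_univ m)
      have hab : a = fun m => ((b m : ℚ) : ℝ) := funext fun m => (hb m).symm
      rw [Set.mem_setOf_eq, hab]
      exact hfq b
    intro a
    have h1 : a ∈ closure (Set.pi Set.univ fun _ : Fin n => Set.range ((↑) : ℚ → ℝ)) :=
      hdense a
    have h2 := closure_mono hsub h1
    rwa [hclosed.closure_eq] at h2
  -- the concentrating polynomial
  let τ : (K →ₐ[ℚ] ℂ) → (K →ₐ[ℚ] ℂ) := fun σ => σ.comp c.toAlgHom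
  have hττ : ∀ σ, τ (τ σ) = σ := by
    intro σ
    apply AlgHom.ext
    intro x
    simp [τ, hcc]
  have hτapp : ∀ (σ : K →ₐ[ℚ] ℂ) (x : K), τ σ x = σ (c x) := fun _ _ => rfl
  have hinj : ∀ σ σ' : K →ₐ[ℚ] ℂ, σ ζ = σ' ζ → σ = σ' := by
    intro σ σ' h
    exact AlgHom.ext_of_adjoin_eq_top htop (by simpa [Set.EqOn] using h)
  set T : Finset (K →ₐ[ℚ] ℂ) := Finset.univ \ {σ₀, τ σ₀} with hT
  set P : Polynomial ℂ := ∏ σ ∈ T, (X - C (σ ζ)) with hP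
  have hmemT : ∀ σ, σ ∈ T ↔ σ ≠ σ₀ ∧ σ ≠ τ σ₀ := by
    intro σ
    simp [hT, not_or]
  have hτT : ∀ σ ∈ T, τ σ ∈ T := by
    intro σ hσ
    rw [hmemT] at hσ ⊢
    constructor
    · intro h; exact hσ.2 (by rw [← hττ σ, h])
    · intro h
      apply hσ.1
      have := congrArg τ h
      rwa [hττ, hττ] at this
  have hPconj : P.map (starRingEnd ℂ) = P := by
    rw [hP, Polynomial.map_prod]
    simp only [Polynomial.map_sub, map_X, map_C]
    refine Finset.prod_nbij' τ τ hτT hτT (fun σ _ => hττ σ) (fun σ _ => hττ σ) ?_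
    intro σ hσ
    rw [hτapp σ ζ, hconj σ ζ]
  have hcoeff : ∀ m : ℕ, (((P.coeff m).re : ℝ) : ℂ) = P.coeff m := by
    intro m
    have : (starRingEnd ℂ) (P.coeff m) = P.coeff m := by
      conv_rhs => rw [← hPconj]
      rw [Polynomial.coeff_map]
    exact Complex.conj_eq_iff_re.mp this
  have hdeg : P.natDegree < n := by
    have h1 : P.natDegree = T.card := by
      rw [hP, Polynomial.natDegree_prod_of_monic _ _ fun σ _ => monic_X_sub_C _]
      simp
    have h2 : T ⊂ Finset.univ := by
      rw [Finset.ssubset_iff_of_subset (Finset.subset_univ T)]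
      exact ⟨σ₀, Finset.mem_univ _, fun h => ((hmemT σ₀).mp h).1 rfl⟩
    rw [h1, hn]
    exact Finset.card_lt_card h2
  set av : Fin n → ℝ := fun m => (P.coeff m).re with hav
  have heval : ∀ σ : K →ₐ[ℚ] ℂ,
      (∑ m : Fin n, ((av m : ℝ) : ℂ) * (σ ζ) ^ (m : ℕ)) = P.eval (σ ζ) := by
    intro σ
    have h1 : ∑ m : Fin n, ((av m : ℝ) : ℂ) * (σ ζ) ^ (m : ℕ)
        = ∑ m ∈ Finset.range n, (((P.coeff m).re : ℝ) : ℂ) * (σ ζ) ^ m :=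
      Fin.sum_univ_eq_sum_range (fun m => (((P.coeff m).re : ℝ) : ℂ) * (σ ζ) ^ m) n
    rw [h1, Polynomial.eval_eq_sum_range' hdeg]
    exact Finset.sum_congr rfl fun m _ => by rw [hcoeff m]
  have hvanish : ∀ σ ∈ T, P.eval (σ ζ) = 0 := by
    intro σ hσ
    rw [hP, Polynomial.eval_prod]
    exact Finset.prod_eq_zero hσ (by simp)
  have hne : ∀ σ', σ' ∉ T → P.eval (σ' ζ) ≠ 0 := by
    intro σ' hσ'
    rw [hP, Polynomial.eval_prod]
    rw [Finset.prod_ne_zero_iff]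
    intro σ hσ
    simp only [Polynomial.eval_sub, Polynomial.eval_X, Polynomial.eval_C]
    rw [sub_ne_zero]
    intro h
    exact hσ' ((hinj σ' σ h) ▸ hσ)
  have hσ₀T : σ₀ ∉ T := fun h => ((hmemT σ₀).mp h).1 rfl
  have hτσ₀T : τ σ₀ ∉ T := fun h => ((hmemT (τ σ₀)).mp h).2 rfl
  have hkey := hfnn av
  rw [hf] at hkey
  simp only at hkey
  have hsplit : ∑ σ : K →ₐ[ℚ] ℂ,
        (σ s).re * Complex.normSq (∑ m : Fin n, ((av m : ℝ) : ℂ) * (σ ζ) ^ (m : ℕ))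
      = ∑ σ ∈ ({σ₀, τ σ₀} : Finset (K →ₐ[ℚ] ℂ)),
        (σ s).re * Complex.normSq (P.eval (σ ζ)) := by
    rw [← Finset.sum_subset (Finset.subset_univ ({σ₀, τ σ₀} : Finset (K →ₐ[ℚ] ℂ)))
      (fun σ _ hσ => ?_)]
    · exact Finset.sum_congr rfl fun σ _ => by rw [heval σ]
    · have hσT : σ ∈ T := by
        rw [hmemT]
        simp only [Finset.mem_insert, Finset.mem_singleton, not_or] at hσ
        exact hσ
      rw [heval σ, hvanish σ hσT]
      simp
  rw [hsplit] at hkey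
  have hnsq₀ : 0 < Complex.normSq (P.eval (σ₀ ζ)) :=
    Complex.normSq_pos.mpr (hne σ₀ hσ₀T)
  by_cases hfix : τ σ₀ = σ₀
  · have hpair : ({σ₀, τ σ₀} : Finset (K →ₐ[ℚ] ℂ)) = {σ₀} := by
      rw [hfix]; simp
    rw [hpair, Finset.sum_singleton] at hkey
    nlinarith [hkey, hnsq₀]
  · have hre : ((τ σ₀) s).re = (σ₀ s).re := by
      rw [hτapp σ₀ s, hconj σ₀ s]
      simp
    have hnsq₁ : 0 < Complex.normSq (P.eval ((τ σ₀) ζ)) :=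
      Complex.normSq_pos.mpr (hne (τ σ₀) hτσ₀T)
    rw [Finset.sum_pair (fun h => hfix h.symm)] at hkey
    rw [hre] at hkey
    nlinarith [hkey, hnsq₀, hnsq₁]

end Stmt17Aux

open Stmt17Aux in
/-- Let `t₁, …, t_k ∈ 𝓞_r = ℤ[ζ_r]` and let `t ∈ K_r = ℚ(ζ_r)` be nonzero
with `Tr(x·t·c(y)) ∈ ℤ` for all `x, y ∈ 𝓞_r`, and set `B_i(x, y) = Tr(x·t_i·c(t)·c(y))`.
Then (a) each `B_i` is symmetric and positive semi-definite and `Σ_i B_i(x, x) > 0` for all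
`x ≠ 0`, if and only if (b) each `t_i·c(t)` is zero or totally positive and `Σ_i t_i·c(t)`
is totally positive. -/
theorem stmt_17 (k : ℕ) (hk : 0 < k) (r : ℕ+) (K : Type*) [Field K] [Algebra ℚ K]
    [IsCyclotomicExtension {(r : ℕ)} ℚ K] (ζ : K) (hζ : IsPrimitiveRoot ζ (r : ℕ))
    (c : K ≃ₐ[ℚ] K) (hc : c ζ = ζ⁻¹)
    (t' : Fin k → Algebra.adjoin ℤ {ζ}) (t : K) (ht : t ≠ 0)
    (hint : ∀ x y : Algebra.adjoin ℤ {ζ}, ∃ n : ℤ,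
      Algebra.trace ℚ K ((x : K) * t * c (y : K)) = (n : ℚ)) :
    ((∀ i, ∀ x y : Algebra.adjoin ℤ {ζ},
        Algebra.trace ℚ K ((x : K) * (t' i : K) * c t * c (y : K)) =
          Algebra.trace ℚ K ((y : K) * (t' i : K) * c t * c (x : K))) ∧
      (∀ i, ∀ x : Algebra.adjoin ℤ {ζ},
        0 ≤ Algebra.trace ℚ K ((x : K) * (t' i : K) * c t * c (x : K))) ∧
      (∀ x : Algebra.adjoin ℤ {ζ}, x ≠ 0 →
        0 < ∑ i, Algebra.trace ℚ K ((x : K) * (t' i : K) * c t * c (x : K)))) ↔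
    ((∀ i, (t' i : K) * c t = 0 ∨
        (∀ σ : K →+* ℂ, ∃ a : ℝ, 0 < a ∧ σ ((t' i : K) * c t) = (a : ℂ))) ∧
      (∀ σ : K →+* ℂ, ∃ a : ℝ, 0 < a ∧ σ (∑ i, (t' i : K) * c t) = (a : ℂ))) := by
  classical
  haveI : NumberField K := IsCyclotomicExtension.numberField {(r : ℕ)} ℚ K
  haveI : Algebra.IsAlgebraic ℚ K := Algebra.IsAlgebraic.of_finite ℚ K
  have hr : 0 < (r : ℕ) := r.pos
  have hζr : ζ ^ (r : ℕ) = 1 := hζ.pow_eq_one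
  have htop : Algebra.adjoin ℚ ({ζ} : Set K) = ⊤ :=
    IsCyclotomicExtension.adjoin_primitive_root_eq_top hζ
  have hconj : ∀ (σ : K →ₐ[ℚ] ℂ) (x : K), σ (c x) = starRingEnd ℂ (σ x) :=
    conj_emb htop hr hζr hc
  have hcc : ∀ x : K, c (c x) = x := cc_id htop hc
  obtain ⟨σe⟩ : Nonempty (K →ₐ[ℚ] ℂ) := ⟨IsAlgClosed.lift⟩
  have hct : c t ≠ 0 := fun h => ht (by
    have := congrArg c.symm h
    simpa using this)
  have htr : ∀ z : K, Algebra.trace ℚ K (c z) = Algebra.trace ℚ K z := fun z =>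
    Algebra.trace_eq_of_algEquiv c z
  constructor
  · -- (a) → (b)
    rintro ⟨ha1, ha2, ha3⟩
    have hone : (1 : Algebra.adjoin ℤ ({ζ} : Set K)) ≠ 0 := by
      intro h
      have h' := congrArg (Subtype.val) h
      simp at h'
    -- step A : c fixes each sᵢ
    have hfix : ∀ i, c ((t' i : K) * c t) = (t' i : K) * c t := by
      intro i
      have key : ∀ m : ℕ, Algebra.trace ℚ K
          (ζ ^ m * (((t' i : K) * c t) - c ((t' i : K) * c t))) = 0 := by
        intro m
        have hζm : ζ ^ m ∈ Algebra.adjoin ℤ ({ζ} : Set K) :=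
          pow_mem (Algebra.self_mem_adjoin_singleton ℤ ζ) m
        have h1 := ha1 i ⟨ζ ^ m, hζm⟩ 1
        rw [show ((⟨ζ ^ m, hζm⟩ : Algebra.adjoin ℤ ({ζ} : Set K)) : K) = ζ ^ m from rfl,
          show ((1 : Algebra.adjoin ℤ ({ζ} : Set K)) : K) = 1 from rfl, map_one] at h1
        have e1 : ζ ^ m * (t' i : K) * c t * 1 = ζ ^ m * ((t' i : K) * c t) := by ring
        have e2 : 1 * (t' i : K) * c t * c (ζ ^ m) = ((t' i : K) * c t) * c (ζ ^ m) := by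
          ring
        rw [e1, e2] at h1
        have e3 : ((t' i : K) * c t) * c (ζ ^ m) = c (c ((t' i : K) * c t) * ζ ^ m) := by
          rw [map_mul, hcc]
        rw [e3, htr] at h1
        rw [mul_sub, map_sub, h1, mul_comm (c ((t' i : K) * c t)) (ζ ^ m), sub_self]
      exact (sub_eq_zero.mp (trace_ker htop _ key)).symm
    have hreal : ∀ i (σ : K →ₐ[ℚ] ℂ),
        (((σ ((t' i : K) * c t)).re : ℝ) : ℂ) = σ ((t' i : K) * c t) := fun i σ =>
      Complex.conj_eq_iff_re.mp (by rw [← hconj σ, hfix i])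
    have hnn : ∀ i (σ : K →ₐ[ℚ] ℂ), 0 ≤ (σ ((t' i : K) * c t)).re := by
      intro i σ
      refine step_b htop hconj hcc (fun x => ?_) σ
      have h2 := ha2 i x
      have e : (x : K) * (t' i : K) * c t * c (x : K)
          = (x : K) * ((t' i : K) * c t) * c (x : K) := by ring
      rwa [e] at h2
    have hpos : ∀ i, (t' i : K) ≠ 0 → ∀ (σ : K →ₐ[ℚ] ℂ),
        0 < (σ ((t' i : K) * c t)).re := by
      intro i hti σ
      have hzne : σ ((t' i : K) * c t) ≠ 0 := by
        intro h
        refine mul_ne_zero hti hct (σ.toRingHom.injective ?_)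
        show σ.toRingHom _ = σ.toRingHom 0
        rw [map_zero]
        exact h
      refine lt_of_le_of_ne (hnn i σ) fun h0 => hzne ?_
      rw [← hreal i σ, ← h0]
      simp
    constructor
    · intro i
      by_cases hti : (t' i : K) = 0
      · left; rw [hti, zero_mul]
      · right
        intro σ
        refine ⟨(σ.toRatAlgHom ((t' i : K) * c t)).re, hpos i hti σ.toRatAlgHom, ?_⟩
        exact (hreal i σ.toRatAlgHom).symm
    · have hex : ∃ i, (t' i : K) ≠ 0 := by
        by_contra hall
        push_neg at hall
        have h3 := ha3 1 hone
        rw [Finset.sum_eq_zero (fun i _ => by rw [hall i]; simp)] at h3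
        exact lt_irrefl _ h3
      obtain ⟨i₀, hi₀⟩ := hex
      intro σ
      refine ⟨(σ.toRatAlgHom (∑ i, (t' i : K) * c t)).re, ?_, ?_⟩
      · rw [map_sum, Complex.re_sum]
        exact Finset.sum_pos' (fun i _ => hnn i σ.toRatAlgHom)
          ⟨i₀, Finset.mem_univ _, hpos i₀ hi₀ σ.toRatAlgHom⟩
      · show σ.toRatAlgHom _ = _
        rw [map_sum, Complex.re_sum]
        push_cast
        exact (Finset.sum_congr rfl fun i _ => (hreal i σ.toRatAlgHom)).symm
  · -- (b) → (a)
    rintro ⟨hb1, hb2⟩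
    have hbi : ∀ i (σ : K →ₐ[ℚ] ℂ), ∃ a : ℝ, 0 ≤ a ∧ σ ((t' i : K) * c t) = (a : ℂ) := by
      intro i σ
      rcases hb1 i with h | h
      · exact ⟨0, le_refl 0, by rw [h, map_zero, Complex.ofReal_zero]⟩
      · obtain ⟨a, ha, haeq⟩ := h (σ : K →+* ℂ)
        exact ⟨a, ha.le, haeq⟩
    have hcs : ∀ i, c ((t' i : K) * c t) = (t' i : K) * c t := by
      intro i
      obtain ⟨a, _, ha⟩ := hbi i σe
      apply σe.toRingHom.injective
      show σe _ = σe _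
      rw [hconj σe, ha]
      simp
    have hS : ∀ (σ : K →ₐ[ℚ] ℂ), ∃ a : ℝ, 0 < a ∧ σ (∑ i, (t' i : K) * c t) = (a : ℂ) :=
      fun σ => hb2 (σ : K →+* ℂ)
    refine ⟨?_, ?_, ?_⟩
    · intro i x y
      have e1 : (x : K) * (t' i : K) * c t * c (y : K)
          = (x : K) * ((t' i : K) * c t) * c (y : K) := by ring
      have e2 : (y : K) * (t' i : K) * c t * c (x : K)
          = c ((x : K) * ((t' i : K) * c t) * c (y : K)) := by
        rw [map_mul, map_mul, hcs i, hcc]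
        ring
      rw [e1, e2, htr]
    · intro i x
      have e : (x : K) * (t' i : K) * c t * c (x : K)
          = (x : K) * ((t' i : K) * c t) * c (x : K) := by ring
      rw [e]
      have h4 := trace_formula hconj ((t' i : K) * c t) (x : K)
      rw [← Rat.cast_nonneg (K := ℝ), h4]
      refine Finset.sum_nonneg fun σ _ => ?_
      obtain ⟨a, ha0, ha⟩ := hbi i σ
      rw [ha]
      simp only [Complex.ofReal_re]
      exact mul_nonneg ha0 (Complex.normSq_nonneg _)
    · intro x hx
      have hxK : (x : K) ≠ 0 := fun h => hx (Subtype.ext h)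
      have hsum : ∑ i, Algebra.trace ℚ K ((x : K) * (t' i : K) * c t * c (x : K))
          = Algebra.trace ℚ K ((x : K) * (∑ i, (t' i : K) * c t) * c (x : K)) := by
        rw [← map_sum]
        congr 1
        rw [Finset.mul_sum, Finset.sum_mul]
        exact Finset.sum_congr rfl fun i _ => by ring
      rw [hsum, ← Rat.cast_pos (K := ℝ), trace_formula hconj _ (x : K)]
      have hterm : ∀ σ : K →ₐ[ℚ] ℂ,
          0 ≤ (σ (∑ i, (t' i : K) * c t)).re * Complex.normSq (σ (x : K)) := by
        intro σ
        obtain ⟨a, ha0, ha⟩ := hS σ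
        rw [ha]
        simp only [Complex.ofReal_re]
        exact mul_nonneg ha0.le (Complex.normSq_nonneg _)
      refine Finset.sum_pos' (fun σ _ => hterm σ) ⟨σe, Finset.mem_univ _, ?_⟩
      obtain ⟨a, ha0, ha⟩ := hS σe
      rw [ha]
      simp only [Complex.ofReal_re]
      have hnsq : 0 < Complex.normSq (σe (x : K)) := by
        refine Complex.normSq_pos.mpr fun h => hxK (σe.toRingHom.injective ?_)
        show σe.toRingHom _ = σe.toRingHom 0
        rw [map_zero]
        exact h
      exact mul_pos ha0 hnsq
end

section
/- Let k and r be positive integers, K_r = ℚ(ζ_r) with ring of integers 𝓞_r = ℤ[ζ_r], ζ_r a primitive r-th root of unity, and c a ℚ-algebra automorphism of K_r with c(ζ_r) = ζ_r^{-1}. Let t_1, …, t_k ∈ 𝓞_r. Then the following are equivalent: (a) there exists a nonzero t ∈ K_r with Tr(x · t · c(y)) ∈ ℤ for all x, y ∈ 𝓞_r such that, setting B_i(x, y) = Tr(x · t_i · c(t) · c(y)), each B_i is symmetric with B_i(x, x) ≥ 0 for all x ∈ 𝓞_r, and Σ_{i=1}^k B_i(x, x) > 0 for all x ≠ 0 (i.e.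 the pairing with components t_1, …, t_k admits a polarization); (b) the elements t_1, …, t_k are not all zero, and for all i, j ∈ {1, …, k} the element t_i · c(t_j) is either zero or totally positive. -/
section
variable (r : ℕ+) (K : Type*) [Field K] [Algebra ℚ K] [IsCyclotomicExtension {(r : ℕ)} ℚ K]

include r in
theorem my_fd : FiniteDimensional ℚ K :=
  IsCyclotomicExtension.finiteDimensional ({(r : ℕ)} : Set ℕ) ℚ K

include r in
theorem my_tr [FiniteDimensional ℚ K] (x : K) :
    algebraMap ℚ ℂ (Algebra.trace ℚ K x) = ∑ σ : K →ₐ[ℚ] ℂ, σ x := by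
  exact trace_eq_sum_embeddings ℂ

variable {K}
variable {ζ : K} (hζ : IsPrimitiveRoot ζ (r : ℕ))

include hζ in
theorem my_ext {A : Type*} [CommRing A] [Algebra ℚ A] (f g : K →ₐ[ℚ] A) (h : f ζ = g ζ) :
    f = g := by
  have htop : Algebra.adjoin ℚ ({ζ} : Set K) = ⊤ :=
    IsCyclotomicExtension.adjoin_primitive_root_eq_top hζ
  apply AlgHom.ext; intro x
  have hx : x ∈ Algebra.adjoin ℚ ({ζ} : Set K) := htop ▸ trivial
  induction hx using Algebra.adjoin_induction with
  | mem z hz => rcases hz with rfl; exact h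
  | algebraMap q => simp only [AlgHom.commutes]
  | add _ _ _ _ h1 h2 => simp [h1, h2]
  | mul _ _ _ _ h1 h2 => simp [h1, h2]

variable (c : K ≃ₐ[ℚ] K) (hc : c ζ = ζ⁻¹)

/-- conj ∘ σ as an algebra hom -/
noncomputable def conjHom (σ : K →ₐ[ℚ] ℂ) : K →ₐ[ℚ] ℂ :=
  { toRingHom := (starRingEnd ℂ).comp σ.toRingHom,
    commutes' := fun q => by simp [AlgHom.commutes] }

@[simp] theorem conjHom_apply (σ : K →ₐ[ℚ] ℂ) (x : K) :
    conjHom σ x = (starRingEnd ℂ) (σ x) := rfl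

include hζ hc in
theorem my_conj (σ : K →ₐ[ℚ] ℂ) (x : K) : σ (c x) = (starRingEnd ℂ) (σ x) := by
  have hr : 0 < (r : ℕ) := r.pos
  have hζσ : (σ ζ) ^ (r : ℕ) = 1 := by rw [← map_pow, hζ.pow_eq_one, map_one]
  have hnz : σ ζ ≠ 0 := by
    intro h; rw [h, zero_pow hr.ne'] at hζσ; exact zero_ne_one hζσ
  have habs : ‖σ ζ‖ = 1 := by
    have h1 : ‖σ ζ‖ ^ (r : ℕ) = 1 := by
      rw [← norm_pow, hζσ, norm_one]
    have h0 : 0 ≤ ‖σ ζ‖ := norm_nonneg _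
    by_contra hne
    rcases lt_or_gt_of_ne hne with hlt | hgt
    · have h2 := pow_lt_one₀ h0 hlt hr.ne'
      rw [h1] at h2; exact lt_irrefl 1 h2
    · have h2 := one_lt_pow₀ hgt hr.ne'
      rw [h1] at h2; exact lt_irrefl 1 h2
  have key : σ.comp c.toAlgHom = conjHom σ := by
    apply my_ext r hζ
    simp only [AlgHom.comp_apply, AlgEquiv.toAlgHom_eq_coe, AlgHom.coe_coe, conjHom_apply, hc]
    change σ (c ζ) = _
    rw [hc, map_inv₀]
    rw [Complex.inv_def, Complex.normSq_eq_norm_sq, habs]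
    simp
  have := congrFun (congrArg DFunLike.coe key) x
  simpa using this

end

section more
variable (r : ℕ+) {K : Type*} [Field K] [Algebra ℚ K] [IsCyclotomicExtension {(r : ℕ)} ℚ K]
  {ζ : K} (hζ : IsPrimitiveRoot ζ (r : ℕ)) (c : K ≃ₐ[ℚ] K) (hc : c ζ = ζ⁻¹)

include hζ hc in
theorem my_cc (x : K) : c (c x) = x := by
  have hz : ζ ≠ 0 := hζ.ne_zero r.pos.ne'
  have key : (c.toAlgHom.comp c.toAlgHom) = AlgHom.id ℚ K := by
    apply my_ext r hζ
    simp [hc, map_inv₀, inv_inv]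
  have := congrFun (congrArg DFunLike.coe key) x
  simpa using this

include hζ hc in
theorem my_cO (x : K) (hx : x ∈ Algebra.adjoin ℤ ({ζ} : Set K)) :
    c x ∈ Algebra.adjoin ℤ ({ζ} : Set K) := by
  have hz : ζ ≠ 0 := hζ.ne_zero r.pos.ne'
  have hinv : ζ⁻¹ ∈ Algebra.adjoin ℤ ({ζ} : Set K) := by
    have hmem : ζ ∈ Algebra.adjoin ℤ ({ζ} : Set K) := Algebra.self_mem_adjoin_singleton ℤ ζ
    have h1 : ζ ^ ((r : ℕ) - 1) * ζ = 1 := by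
      rw [← pow_succ, Nat.sub_add_cancel r.pos, hζ.pow_eq_one]
    rw [show ζ⁻¹ = ζ ^ ((r : ℕ) - 1) from (eq_inv_of_mul_eq_one_left h1).symm]
    exact pow_mem hmem _
  induction hx using Algebra.adjoin_induction with
  | mem z hz' => rcases hz' with rfl; rw [hc]; exact hinv
  | algebraMap q => simpa using Subalgebra.algebraMap_mem _ q
  | add _ _ _ _ h1 h2 => rw [map_add]; exact add_mem h1 h2
  | mul _ _ _ _ h1 h2 => rw [map_mul]; exact mul_mem h1 h2

include hζ in
theorem my_int (x : K) (hx : x ∈ Algebra.adjoin ℤ ({ζ} : Set K)) : IsIntegral ℤ x := by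
  induction hx using Algebra.adjoin_induction with
  | mem z hz' =>
    rcases hz' with rfl
    exact ⟨Polynomial.X ^ (r : ℕ) - 1, Polynomial.monic_X_pow_sub_C 1 r.pos.ne', by
      simp [hζ.pow_eq_one, sub_eq_zero]⟩
  | algebraMap q => exact isIntegral_algebraMap
  | add _ _ _ _ h1 h2 => exact h1.add h2
  | mul _ _ _ _ h1 h2 => exact h1.mul h2

include hζ in
theorem my_denom (x : K) : ∃ (m : ℕ) (z : Algebra.adjoin ℤ ({ζ} : Set K)),
    0 < m ∧ (z : K) = (m : K) * x := by
  haveI : CharZero K := charZero_of_injective_algebraMap (algebraMap ℚ K).injective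
  have htop : Algebra.adjoin ℚ ({ζ} : Set K) = ⊤ :=
    IsCyclotomicExtension.adjoin_primitive_root_eq_top hζ
  have hx : x ∈ Algebra.adjoin ℚ ({ζ} : Set K) := htop ▸ trivial
  induction hx using Algebra.adjoin_induction with
  | mem z hz' =>
    simp only [Set.mem_singleton_iff] at hz'
    subst hz'
    exact ⟨1, ⟨z, Algebra.self_mem_adjoin_singleton ℤ z⟩, one_pos, by simp⟩
  | algebraMap q =>
    refine ⟨q.den, ⟨(q.num : K), by simpa using Subalgebra.intCast_mem _ q.num⟩,
      q.den_pos, ?_⟩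
    have hden : ((q.den : ℕ) : K) ≠ 0 :=
      (Nat.cast_ne_zero (R := K)).mpr q.den_pos.ne'
    rw [eq_ratCast (algebraMap ℚ K) q, Rat.cast_def]
    field_simp
  | add a b _ _ h1 h2 =>
    obtain ⟨m1, z1, hm1, hz1⟩ := h1
    obtain ⟨m2, z2, hm2, hz2⟩ := h2
    refine ⟨m1 * m2, ⟨(m2 : K) * (z1 : K) + (m1 : K) * (z2 : K), ?_⟩,
      Nat.mul_pos hm1 hm2, ?_⟩
    · exact add_mem (mul_mem (Subalgebra.natCast_mem _ m2) z1.2)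
        (mul_mem (Subalgebra.natCast_mem _ m1) z2.2)
    · show (m2 : K) * (z1 : K) + (m1 : K) * (z2 : K) = ((m1 * m2 : ℕ) : K) * (a + b)
      rw [hz1, hz2]; push_cast; ring
  | mul a b _ _ h1 h2 =>
    obtain ⟨m1, z1, hm1, hz1⟩ := h1
    obtain ⟨m2, z2, hm2, hz2⟩ := h2
    refine ⟨m1 * m2, z1 * z2, Nat.mul_pos hm1 hm2, ?_⟩
    show (z1 : K) * (z2 : K) = ((m1 * m2 : ℕ) : K) * (a * b)
    rw [hz1, hz2]; push_cast; ring

include r hζ hc in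
theorem my_trc [FiniteDimensional ℚ K] (x : K) :
    Algebra.trace ℚ K (c x) = Algebra.trace ℚ K x := by
  apply (algebraMap ℚ ℂ).injective
  rw [my_tr r K, my_tr r K]
  have hbij : Function.Bijective (conjHom (K := K)) := by
    apply Function.Involutive.bijective
    intro σ
    exact AlgHom.ext fun y => by simp
  calc ∑ σ : K →ₐ[ℚ] ℂ, σ (c x) = ∑ σ : K →ₐ[ℚ] ℂ, (conjHom σ) x :=
        Finset.sum_congr rfl fun σ _ => my_conj r hζ c hc σ x
    _ = ∑ σ : K →ₐ[ℚ] ℂ, σ x :=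
        Fintype.sum_bijective conjHom hbij _ _ (fun σ => rfl)
end more

section psd
variable (r : ℕ+) {K : Type*} [Field K] [Algebra ℚ K] [IsCyclotomicExtension {(r : ℕ)} ℚ K]
  {ζ : K} (hζ : IsPrimitiveRoot ζ (r : ℕ)) (c : K ≃ₐ[ℚ] K) (hc : c ζ = ζ⁻¹)

open Polynomial Complex in
include hζ hc in
theorem my_psd [FiniteDimensional ℚ K] {v : K} (hv : c v = v)
    (hpsd : ∀ x : Algebra.adjoin ℤ ({ζ} : Set K),
      0 ≤ Algebra.trace ℚ K ((x : K) * v * c (x : K)))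
    (σ₀ : K →ₐ[ℚ] ℂ) : ∃ b : ℝ, 0 ≤ b ∧ σ₀ v = (b : ℂ) := by
  haveI : CharZero K := charZero_of_injective_algebraMap (algebraMap ℚ K).injective
  -- realness
  have hreal : (starRingEnd ℂ) (σ₀ v) = σ₀ v := by
    rw [← my_conj r hζ c hc σ₀ v, hv]
  refine ⟨(σ₀ v).re, ?_, (Complex.conj_eq_iff_re.mp hreal).symm⟩
  -- the polynomial
  set z₀ : ℂ := σ₀ ζ with hz₀
  set S : Finset (K →ₐ[ℚ] ℂ) :=
    Finset.univ.filter (fun σ => σ ζ ≠ z₀ ∧ σ ζ ≠ (starRingEnd ℂ) z₀) with hS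
  set q : ℂ[X] := ∏ σ ∈ S, (X - C (σ ζ)) with hq
  set p : ℂ[X] := q * q.map (starRingEnd ℂ) with hp
  have hpconj : p.map (starRingEnd ℂ) = p := by
    rw [hp, Polynomial.map_mul, Polynomial.map_map]
    have : (starRingEnd ℂ).comp (starRingEnd ℂ) = RingHom.id ℂ :=
      RingHom.ext fun z => Complex.conj_conj z
    rw [this, Polynomial.map_id, mul_comm]
  have hcoeff : ∀ j : ℕ, ((p.coeff j).re : ℂ) = p.coeff j := by
    intro j
    have : (starRingEnd ℂ) (p.coeff j) = p.coeff j := by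
      conv_rhs => rw [← hpconj]
      rw [Polynomial.coeff_map]
    exact Complex.conj_eq_iff_re.mp this
  set n : ℕ := p.natDegree + 1 with hn
  -- the continuous function
  set F : (Fin n → ℝ) → ℝ := fun d => ∑ σ : K →ₐ[ℚ] ℂ,
    (σ v).re * Complex.normSq (∑ j : Fin n, (d j : ℂ) * (σ ζ) ^ (j : ℕ)) with hF
  have hFcont : Continuous F := by
    refine continuous_finset_sum _ fun σ _ => Continuous.mul continuous_const ?_
    exact Complex.continuous_normSq.comp <| continuous_finset_sum _ fun j _ =>
      ((Complex.continuous_ofReal.comp (continuous_apply j)).mul continuous_const)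
  -- nonnegativity on rational points
  have hFrat : ∀ qv : Fin n → ℚ, 0 ≤ F (fun j => ((qv j : ℝ))) := by
    intro qv
    set x : K := ∑ j : Fin n, algebraMap ℚ K (qv j) * ζ ^ (j : ℕ) with hx
    have htr : 0 ≤ Algebra.trace ℚ K (x * v * c x) := by
      obtain ⟨m, z, hm, hz⟩ := my_denom r hζ x
      have hzz : (z : K) * v * c (z : K) = ((m : ℚ) * (m : ℚ)) • (x * v * c x) := by
        rw [hz, map_mul, map_natCast, Algebra.smul_def]
        push_cast
        ring
      have h1 := hpsd z
      rw [hzz, map_smul, smul_eq_mul] at h1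
      have hm2 : 0 < (m : ℚ) * (m : ℚ) := by positivity
      nlinarith [h1, hm2]
    -- identify F with the trace
    have hσx : ∀ σ : K →ₐ[ℚ] ℂ, σ x = ∑ j : Fin n, ((qv j : ℂ)) * (σ ζ) ^ (j : ℕ) := by
      intro σ
      rw [hx, map_sum]
      refine Finset.sum_congr rfl fun j _ => ?_
      rw [map_mul, map_pow, AlgHom.commutes]
      norm_cast
    have hcast : (algebraMap ℚ ℂ) (Algebra.trace ℚ K (x * v * c x))
        = ∑ σ : K →ₐ[ℚ] ℂ, σ v * (Complex.normSq (σ x) : ℂ) := by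
      rw [my_tr r K]
      refine Finset.sum_congr rfl fun σ _ => ?_
      rw [map_mul, map_mul, my_conj r hζ c hc σ x]
      rw [← Complex.mul_conj (σ x)]
      ring
    have hre : ((Algebra.trace ℚ K (x * v * c x) : ℚ) : ℝ)
        = ∑ σ : K →ₐ[ℚ] ℂ, (σ v).re * Complex.normSq (σ x) := by
      have h2 := congrArg Complex.re hcast
      rw [Complex.re_sum] at h2
      have h3 : ((algebraMap ℚ ℂ) (Algebra.trace ℚ K (x * v * c x))).re
          = ((Algebra.trace ℚ K (x * v * c x) : ℚ) : ℝ) := by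
        rw [eq_ratCast (algebraMap ℚ ℂ)]
        simp
      rw [← h3, h2]
      refine Finset.sum_congr rfl fun σ _ => ?_
      simp [Complex.mul_re]
    have : F (fun j => ((qv j : ℝ))) = ((Algebra.trace ℚ K (x * v * c x) : ℚ) : ℝ) := by
      rw [hre, hF]
      refine Finset.sum_congr rfl fun σ _ => ?_
      rw [hσx σ]
      norm_num
    rw [this]
    exact_mod_cast htr
  -- nonnegativity everywhere by density
  have hFall : ∀ d : Fin n → ℝ, 0 ≤ F d := by
    intro d
    have hdense : ∀ ε : ℝ, 0 < ε → ∃ qv : Fin n → ℚ,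
        dist d (fun j => ((qv j : ℝ))) < ε := by
      intro ε hε
      have := fun j => exists_rat_near (d j) (half_pos hε)
      choose qf hqf using this
      refine ⟨qf, ?_⟩
      rw [dist_pi_lt_iff hε]
      intro j
      rw [Real.dist_eq]
      calc |d j - (qf j : ℝ)| < ε / 2 := hqf j
        _ < ε := half_lt_self hε
    by_contra hneg
    push_neg at hneg
    have hopen : IsOpen (F ⁻¹' Set.Iio 0) := isOpen_Iio.preimage hFcont
    obtain ⟨δ, hδpos, hball⟩ := Metric.isOpen_iff.mp hopen d hneg
    obtain ⟨qv, hqv⟩ := hdense δ hδpos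
    have hlt : F (fun j => ((qv j : ℝ))) < 0 := hball (by rwa [Metric.mem_ball, dist_comm])
    exact absurd (hFrat qv) (not_le.mpr hlt)
  -- evaluate at the coefficients of p
  by_contra hneg0
  push_neg at hneg0
  set d : Fin n → ℝ := fun j => (p.coeff (j : ℕ)).re with hd
  have hinner : ∀ σ : K →ₐ[ℚ] ℂ,
      (∑ j : Fin n, ((d j : ℝ) : ℂ) * (σ ζ) ^ (j : ℕ)) = p.eval (σ ζ) := by
    intro σ
    rw [Polynomial.eval_eq_sum_range, ← hn,
      ← Fin.sum_univ_eq_sum_range (fun i => p.coeff i * (σ ζ) ^ i) n]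
    exact Finset.sum_congr rfl fun j _ => by rw [hd, hcoeff]
  have hFd : F d = ∑ σ : K →ₐ[ℚ] ℂ, (σ v).re * Complex.normSq (p.eval (σ ζ)) := by
    rw [hF]
    exact Finset.sum_congr rfl fun σ _ => by rw [hinner σ]
  have hq0 : ∀ σ ∈ S, p.eval (σ ζ) = 0 := by
    intro σ hσ
    rw [hp, eval_mul, hq, eval_prod]
    rw [Finset.prod_eq_zero hσ (by simp)]
    exact zero_mul _
  have hq1 : q.eval z₀ ≠ 0 := by
    rw [hq, eval_prod]
    refine Finset.prod_ne_zero_iff.mpr fun σ hσ => ?_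
    simp only [eval_sub, eval_X, eval_C, sub_ne_zero]
    exact fun h => (Finset.mem_filter.mp hσ).2.1 h.symm
  have hq2 : (q.map (starRingEnd ℂ)).eval z₀ ≠ 0 := by
    rw [hq, Polynomial.map_prod, eval_prod]
    refine Finset.prod_ne_zero_iff.mpr fun σ hσ => ?_
    rw [Polynomial.map_sub, Polynomial.map_X, Polynomial.map_C, eval_sub, eval_X, eval_C,
      sub_ne_zero]
    intro h
    have h2 := congrArg (starRingEnd ℂ) h
    rw [Complex.conj_conj] at h2
    exact (Finset.mem_filter.mp hσ).2.2 h2.symm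
  have hpz₀ : p.eval z₀ ≠ 0 := by
    rw [hp, eval_mul]; exact mul_ne_zero hq1 hq2
  have hterm : ∀ σ : K →ₐ[ℚ] ℂ, (σ v).re * Complex.normSq (p.eval (σ ζ)) ≤ 0 := by
    intro σ
    by_cases hσ : σ ∈ S
    · rw [hq0 σ hσ]; simp
    · have hre2 : (σ v).re = (σ₀ v).re := by
        rw [hS, Finset.mem_filter] at hσ
        push_neg at hσ
        rcases eq_or_ne (σ ζ) z₀ with h | h
        · rw [my_ext r hζ σ σ₀ h]
        · have h2 : σ ζ = (starRingEnd ℂ) z₀ := hσ (Finset.mem_univ σ) h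
          have h3 : σ = conjHom σ₀ := my_ext r hζ σ (conjHom σ₀) (by rw [h2]; rfl)
          rw [h3, conjHom_apply, Complex.conj_re]
      rw [hre2]
      exact mul_nonpos_of_nonpos_of_nonneg hneg0.le (Complex.normSq_nonneg _)
  have hstrict : (σ₀ v).re * Complex.normSq (p.eval (σ₀ ζ)) < 0 := by
    rw [← hz₀]
    exact mul_neg_of_neg_of_pos hneg0 (Complex.normSq_pos.mpr hpz₀)
  have hFdneg : F d < 0 := by
    rw [hFd]
    calc ∑ σ : K →ₐ[ℚ] ℂ, (σ v).re * Complex.normSq (p.eval (σ ζ))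
        < ∑ _σ : K →ₐ[ℚ] ℂ, (0 : ℝ) :=
          Finset.sum_lt_sum (fun σ _ => hterm σ) ⟨σ₀, Finset.mem_univ _, hstrict⟩
      _ = 0 := by simp
  exact absurd (hFall d) (not_le.mpr hFdneg)
end psd

section main
variable (r : ℕ+) {K : Type*} [Field K] [Algebra ℚ K] [IsCyclotomicExtension {(r : ℕ)} ℚ K]
  {ζ : K} (hζ : IsPrimitiveRoot ζ (r : ℕ)) (c : K ≃ₐ[ℚ] K) (hc : c ζ = ζ⁻¹)

include hζ hc in
theorem my_pos [FiniteDimensional ℚ K] (v x : K)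
    (hv : ∀ σ : K →ₐ[ℚ] ℂ, ∃ a : ℝ, 0 < a ∧ σ v = (a : ℂ)) :
    0 ≤ Algebra.trace ℚ K (x * v * c x) ∧
      (x ≠ 0 → 0 < Algebra.trace ℚ K (x * v * c x)) := by
  haveI : Algebra.IsAlgebraic ℚ K := Algebra.IsAlgebraic.of_finite ℚ K
  haveI : Nonempty (K →ₐ[ℚ] ℂ) := ⟨IsAlgClosed.lift⟩
  choose a ha hva using hv
  have hre : ((Algebra.trace ℚ K (x * v * c x) : ℚ) : ℝ)
      = ∑ σ : K →ₐ[ℚ] ℂ, a σ * Complex.normSq (σ x) := by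
    have hcast : (algebraMap ℚ ℂ) (Algebra.trace ℚ K (x * v * c x))
        = ∑ σ : K →ₐ[ℚ] ℂ, ((a σ * Complex.normSq (σ x) : ℝ) : ℂ) := by
      rw [my_tr r K]
      refine Finset.sum_congr rfl fun σ _ => ?_
      rw [map_mul, map_mul, my_conj r hζ c hc σ x, hva σ, Complex.ofReal_mul,
        ← Complex.mul_conj (σ x)]
      ring
    have h2 := congrArg Complex.re hcast
    rw [Complex.re_sum] at h2
    have h3 : ((algebraMap ℚ ℂ) (Algebra.trace ℚ K (x * v * c x))).re
        = ((Algebra.trace ℚ K (x * v * c x) : ℚ) : ℝ) := by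
      rw [eq_ratCast (algebraMap ℚ ℂ)]; simp
    rw [← h3, h2]
    exact Finset.sum_congr rfl fun σ _ => by simp
  constructor
  · have : (0 : ℝ) ≤ ∑ σ : K →ₐ[ℚ] ℂ, a σ * Complex.normSq (σ x) :=
      Finset.sum_nonneg fun σ _ => mul_nonneg (ha σ).le (Complex.normSq_nonneg _)
    rw [← hre] at this
    exact_mod_cast this
  · intro hx
    have : (0 : ℝ) < ∑ σ : K →ₐ[ℚ] ℂ, a σ * Complex.normSq (σ x) := by
      refine Finset.sum_pos (fun σ _ => ?_) Finset.univ_nonempty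
      exact mul_pos (ha σ) (Complex.normSq_pos.mpr (fun h => hx (by
        have := σ.toRingHom.injective (a₁ := x) (a₂ := 0) (by simpa using h)
        exact this)))
    rw [← hre] at this
    exact_mod_cast this

include hζ in
theorem my_w0 [FiniteDimensional ℚ K] (w : K)
    (hw : ∀ x : Algebra.adjoin ℤ ({ζ} : Set K), Algebra.trace ℚ K ((x : K) * w) = 0) :
    w = 0 := by
  have hall : ∀ x : K, Algebra.trace ℚ K (x * w) = 0 := by
    intro x
    obtain ⟨m, z, hm, hz⟩ := my_denom r hζ x
    have h1 := hw z
    rw [hz] at h1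
    have h2 : (m : K) * x * w = (m : ℚ) • (x * w) := by
      rw [Algebra.smul_def]
      push_cast
      ring
    rw [h2, map_smul, smul_eq_mul] at h1
    have hm0 : ((m : ℚ)) ≠ 0 := by exact_mod_cast hm.ne'
    exact (mul_eq_zero.mp h1).resolve_left hm0
  haveI : Algebra.IsSeparable ℚ K := inferInstance
  have hnd := traceForm_nondegenerate ℚ K
  apply hnd.1
  intro y
  have := hall y
  rw [Algebra.traceForm_apply, mul_comm]
  exact this
end main

/-- For `t₁, …, t_k ∈ 𝓞_r = ℤ[ζ_r]`, the lattice pairing with components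
`t₁, …, t_k` admits a polarization — i.e. (a) there is a nonzero `t ∈ K_r` with
`Tr(x·t·c(y)) ∈ ℤ` on `𝓞_r` such that each `B_i(x, y) = Tr(x·t_i·c(t)·c(y))` is symmetric
and positive semi-definite and `Σ_i B_i(x, x) > 0` for `x ≠ 0` — if and only if (b) the
`t_i` are not all zero and each `t_i·c(t_j)` is zero or totally positive. -/
theorem stmt_18 (k : ℕ) (hk : 0 < k) (r : ℕ+) (K : Type*) [Field K] [Algebra ℚ K]
    [IsCyclotomicExtension {(r : ℕ)} ℚ K] (ζ : K) (hζ : IsPrimitiveRoot ζ (r : ℕ))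
    (c : K ≃ₐ[ℚ] K) (hc : c ζ = ζ⁻¹)
    (t' : Fin k → Algebra.adjoin ℤ {ζ}) :
    ((∃ t : K, t ≠ 0 ∧
        (∀ x y : Algebra.adjoin ℤ {ζ}, ∃ n : ℤ,
          Algebra.trace ℚ K ((x : K) * t * c (y : K)) = (n : ℚ)) ∧
        (∀ i, ∀ x y : Algebra.adjoin ℤ {ζ},
          Algebra.trace ℚ K ((x : K) * (t' i : K) * c t * c (y : K)) =
            Algebra.trace ℚ K ((y : K) * (t' i : K) * c t * c (x : K))) ∧
        (∀ i, ∀ x : Algebra.adjoin ℤ {ζ},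
          0 ≤ Algebra.trace ℚ K ((x : K) * (t' i : K) * c t * c (x : K))) ∧
        (∀ x : Algebra.adjoin ℤ {ζ}, x ≠ 0 →
          0 < ∑ i, Algebra.trace ℚ K ((x : K) * (t' i : K) * c t * c (x : K)))) ↔
      ((∃ i, t' i ≠ 0) ∧
        ∀ i j, (t' i : K) * c (t' j : K) = 0 ∨
          (∀ σ : K →+* ℂ, ∃ a : ℝ, 0 < a ∧ σ ((t' i : K) * c (t' j : K)) = (a : ℂ)))) := by
  haveI : FiniteDimensional ℚ K := my_fd r K
  haveI : CharZero K := charZero_of_injective_algebraMap (algebraMap ℚ K).injective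
  haveI : Algebra.IsAlgebraic ℚ K := Algebra.IsAlgebraic.of_finite ℚ K
  haveI : Nonempty (K →ₐ[ℚ] ℂ) := ⟨IsAlgClosed.lift⟩
  have hcoe0 : ∀ z : Algebra.adjoin ℤ ({ζ} : Set K), z ≠ 0 → (z : K) ≠ 0 := by
    intro z hz h
    exact hz (Subtype.ext h)
  constructor
  · rintro ⟨t, ht0, hint, hsym, hpsd, hpos⟩
    -- (a) ⇒ (b)
    have hone : (1 : Algebra.adjoin ℤ ({ζ} : Set K)) ≠ 0 := by
      intro h
      exact one_ne_zero (α := K) (by exact_mod_cast congrArg Subtype.val h)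
    have hne : ∃ i, t' i ≠ 0 := by
      by_contra hall
      push_neg at hall
      have h1 := hpos 1 hone
      have h2 : ∀ i : Fin k, Algebra.trace ℚ K
          (((1 : Algebra.adjoin ℤ ({ζ} : Set K)) : K) * (t' i : K) * c t *
            c ((1 : Algebra.adjoin ℤ ({ζ} : Set K)) : K)) = 0 := by
        intro i
        rw [hall i]
        norm_num
      rw [Finset.sum_congr rfl (fun i _ => h2 i)] at h1
      simp at h1
    refine ⟨hne, ?_⟩
    -- symmetry gives c (v i) = v i where v i = t' i * c t
    have hcv : ∀ i, c ((t' i : K) * c t) = (t' i : K) * c t := by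
      intro i
      have key : ∀ x : Algebra.adjoin ℤ ({ζ} : Set K),
          Algebra.trace ℚ K ((x : K) * ((t' i : K) * c t - c ((t' i : K) * c t))) = 0 := by
        intro x
        have h1 := hsym i x 1
        rw [mul_sub, map_sub, sub_eq_zero]
        have e2 : (x : K) * c ((t' i : K) * c t)
            = c (((1 : Algebra.adjoin ℤ ({ζ} : Set K)) : K) * (t' i : K) * c t * c (x : K)) := by
          simp only [map_mul, map_one, OneMemClass.coe_one, my_cc r hζ c hc]
          ring
        have e3 : (x : K) * ((t' i : K) * c t)
            = (x : K) * (t' i : K) * c t * c ((1 : Algebra.adjoin ℤ ({ζ} : Set K)) : K) := by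
          simp only [map_one, OneMemClass.coe_one]
          ring
        rw [e3, h1, e2, my_trc r hζ c hc]
      have h4 : (t' i : K) * c t - c ((t' i : K) * c t) = 0 :=
        my_w0 r hζ ((t' i : K) * c t - c ((t' i : K) * c t)) key
      linear_combination -h4
    -- psd gives total nonnegativity of v i
    have hb : ∀ i, ∀ σ : K →ₐ[ℚ] ℂ, ∃ b : ℝ, 0 ≤ b ∧ σ ((t' i : K) * c t) = (b : ℂ) := by
      intro i
      refine my_psd r hζ c hc (hcv i) ?_
      intro x
      have := hpsd i x
      have e : (x : K) * ((t' i : K) * c t) * c (x : K)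
          = (x : K) * (t' i : K) * c t * c (x : K) := by ring
      rwa [e]
    intro i j
    by_cases h0 : (t' i : K) * c (t' j : K) = 0
    · exact Or.inl h0
    · right
      intro σ
      set σ' : K →ₐ[ℚ] ℂ := RingHom.equivRatAlgHom K ℂ σ with hσ'
      have hσeq : ∀ z : K, σ z = σ' z := fun z => rfl
      obtain ⟨bi, hbi, hvi⟩ := hb i σ'
      obtain ⟨bj, hbj, hvj⟩ := hb j σ'
      have hti : (t' i : K) ≠ 0 := fun h => h0 (by rw [h]; ring)
      have htj : (t' j : K) ≠ 0 := fun h => h0 (by rw [h, map_zero]; ring)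
      have hct : c t ≠ 0 := fun h => ht0 (by
        have := congrArg c h
        rwa [my_cc r hζ c hc, map_zero] at this)
      have hvine : (t' i : K) * c t ≠ 0 := mul_ne_zero hti hct
      have hvjne : (t' j : K) * c t ≠ 0 := mul_ne_zero htj hct
      have hbi' : 0 < bi := by
        rcases hbi.lt_or_eq with h | h
        · exact h
        · exfalso
          apply hvine
          apply σ'.toRingHom.injective
          rw [map_zero]
          show σ' ((t' i : K) * c t) = 0
          rw [hvi, ← h]; norm_num
      have hbj' : 0 < bj := by
        rcases hbj.lt_or_eq with h | h
        · exact h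
        · exfalso
          apply hvjne
          apply σ'.toRingHom.injective
          rw [map_zero]
          show σ' ((t' j : K) * c t) = 0
          rw [hvj, ← h]; norm_num
      have htne : σ' t ≠ 0 := fun h => ht0 (σ'.toRingHom.injective (by simpa using h))
      have hns0 : 0 < Complex.normSq (σ' t) := Complex.normSq_pos.mpr htne
      refine ⟨bi * bj / Complex.normSq (σ' t), div_pos (mul_pos hbi' hbj') hns0, ?_⟩
      have h1 : σ' ((t' i : K)) * (starRingEnd ℂ) (σ' t) = (bi : ℂ) := by
        rw [← my_conj r hζ c hc σ' t, ← map_mul, hvi]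
      have h2 : σ' ((t' j : K)) * (starRingEnd ℂ) (σ' t) = (bj : ℂ) := by
        rw [← my_conj r hζ c hc σ' t, ← map_mul, hvj]
      have h2' : (starRingEnd ℂ) (σ' ((t' j : K))) * σ' t = (bj : ℂ) := by
        have := congrArg (starRingEnd ℂ) h2
        rwa [map_mul, Complex.conj_conj, Complex.conj_ofReal] at this
      have hns : ((Complex.normSq (σ' t) : ℝ) : ℂ) ≠ 0 := by
        exact_mod_cast hns0.ne'
      rw [hσeq, map_mul, my_conj r hζ c hc σ' ((t' j : K) : K), Complex.ofReal_div,
        eq_div_iff hns]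
      calc σ' ((t' i : K)) * (starRingEnd ℂ) (σ' ((t' j : K))) * ((Complex.normSq (σ' t) : ℝ) : ℂ)
          = (σ' ((t' i : K)) * (starRingEnd ℂ) (σ' t))
            * ((starRingEnd ℂ) (σ' ((t' j : K))) * σ' t) := by
            rw [← Complex.mul_conj (σ' t)]; ring
        _ = ((bi * bj : ℝ) : ℂ) := by rw [h1, h2']; push_cast; ring
  · rintro ⟨⟨i₀, hi₀⟩, hb⟩
    have hti₀ : ((t' i₀ : K)) ≠ 0 := hcoe0 _ hi₀
    refine ⟨(t' i₀ : K), hti₀, ?_, ?_, ?_, ?_⟩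
    · -- integrality
      intro x y
      have hx : IsIntegral ℤ (x : K) := my_int r hζ _ x.2
      have ht : IsIntegral ℤ ((t' i₀ : K)) := my_int r hζ _ (t' i₀).2
      have hy : IsIntegral ℤ (c (y : K)) := my_int r hζ _ (my_cO r hζ c hc _ y.2)
      have hint : IsIntegral ℤ ((x : K) * (t' i₀ : K) * c (y : K)) := (hx.mul ht).mul hy
      have htr : IsIntegral ℤ (Algebra.trace ℚ K ((x : K) * (t' i₀ : K) * c (y : K))) :=
        Algebra.isIntegral_trace hint
      obtain ⟨n, hn⟩ := IsIntegrallyClosed.isIntegral_iff.mp htr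
      exact ⟨n, by rw [← hn]; simp⟩
    · -- symmetry
      intro i x y
      -- c (v i) = v i where v i = t' i * c (t' i₀)
      have hcv : c ((t' i : K) * c ((t' i₀ : K))) = (t' i : K) * c ((t' i₀ : K)) := by
        rcases hb i i₀ with h | h
        · rw [h, map_zero]
        · have hall : ∀ σ' : K →ₐ[ℚ] ℂ,
              σ' (c ((t' i : K) * c ((t' i₀ : K)))) = σ' ((t' i : K) * c ((t' i₀ : K))) := by
            intro σ'
            obtain ⟨a, _, ha⟩ := h σ'.toRingHom
            have ha' : σ' ((t' i : K) * c ((t' i₀ : K))) = (a : ℂ) := ha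
            rw [my_conj r hζ c hc, ha']
            exact Complex.conj_ofReal a
          obtain ⟨σ'⟩ := ‹Nonempty (K →ₐ[ℚ] ℂ)›
          exact σ'.toRingHom.injective (hall σ')
      rw [← my_trc r hζ c hc ((x : K) * (t' i : K) * c ((t' i₀ : K)) * c (y : K))]
      congr 1
      have hcv' : c ((t' i : K)) * (t' i₀ : K) = (t' i : K) * c ((t' i₀ : K)) := by
        have h5 := hcv
        rwa [map_mul, my_cc r hζ c hc] at h5
      simp only [map_mul, my_cc r hζ c hc]
      linear_combination (c (x : K) * (y : K)) * hcv'
    · -- psd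
      intro i x
      rcases hb i i₀ with h | h
      · have e : (x : K) * (t' i : K) * c ((t' i₀ : K)) * c (x : K)
            = (x : K) * ((t' i : K) * c ((t' i₀ : K))) * c (x : K) := by ring
        rw [e, h]
        norm_num
      · have h' : ∀ σ' : K →ₐ[ℚ] ℂ, ∃ a : ℝ, 0 < a ∧
            σ' ((t' i : K) * c ((t' i₀ : K))) = (a : ℂ) := fun σ' => h σ'.toRingHom
        have := (my_pos r hζ c hc ((t' i : K) * c ((t' i₀ : K))) (x : K) h').1
        have e : (x : K) * ((t' i : K) * c ((t' i₀ : K))) * c (x : K)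
            = (x : K) * (t' i : K) * c ((t' i₀ : K)) * c (x : K) := by ring
        rwa [e] at this
    · -- positivity
      intro x hx
      refine Finset.sum_pos' (fun i _ => ?_) ⟨i₀, Finset.mem_univ _, ?_⟩
      · rcases hb i i₀ with h | h
        · have e : (x : K) * (t' i : K) * c ((t' i₀ : K)) * c (x : K)
              = (x : K) * ((t' i : K) * c ((t' i₀ : K))) * c (x : K) := by ring
          rw [e, h]
          norm_num
        · have h' : ∀ σ' : K →ₐ[ℚ] ℂ, ∃ a : ℝ, 0 < a ∧
              σ' ((t' i : K) * c ((t' i₀ : K))) = (a : ℂ) := fun σ' => h σ'.toRingHom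
          have := (my_pos r hζ c hc ((t' i : K) * c ((t' i₀ : K))) (x : K) h').1
          have e : (x : K) * ((t' i : K) * c ((t' i₀ : K))) * c (x : K)
              = (x : K) * (t' i : K) * c ((t' i₀ : K)) * c (x : K) := by ring
          rwa [e] at this
      · have hne : (t' i₀ : K) * c ((t' i₀ : K)) ≠ 0 :=
          mul_ne_zero hti₀ (fun h => hti₀ (by
            have := congrArg c h
            rwa [my_cc r hζ c hc, map_zero] at this))
        have h := (hb i₀ i₀).resolve_left hne
        have h' : ∀ σ' : K →ₐ[ℚ] ℂ, ∃ a : ℝ, 0 < a ∧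
            σ' ((t' i₀ : K) * c ((t' i₀ : K))) = (a : ℂ) := fun σ' => h σ'.toRingHom
        have := (my_pos r hζ c hc ((t' i₀ : K) * c ((t' i₀ : K))) (x : K) h').2
          (hcoe0 _ hx)
        have e : (x : K) * ((t' i₀ : K) * c ((t' i₀ : K))) * c (x : K)
            = (x : K) * (t' i₀ : K) * c ((t' i₀ : K)) * c (x : K) := by ring
        rwa [e] at this
end
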